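/- arXiv:2506.09687 — 3 statements merged into one kernel-verified Lean document; each statement's English description precedes it below -/
import Mathlib

section
/- Let 𝒳 = span{X_1, …, X_k} ⊂ 𝔽^{n×n} (𝔽 = ℝ or ℂ) be a k-dimensional subspace and let X_* ∈ 𝒳 be a spectral approximation of Y ∈ 𝔽^{n×n} \ 𝒳. Define A_i = (Y − X_*)ᴴ X_i for i = 1, …, k. If the set 𝓕(A_1, …, A_k; Σ_{Y−X_*}) is convex, then max_{‖v‖₂=1} min_{X∈𝒳} ‖(Y − X)v‖₂ = min_{X∈𝒳} ‖Y − X‖₂. -/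
open Matrix

variable {𝕜 : Type*} [RCLike 𝕜]

/-- The spectral norm (matrix 2-norm): the supremum of `‖A v‖₂` over unit Euclidean
norm vectors `v`. -/
noncomputable def specNorm {m : Type*} [Fintype m] [DecidableEq m]
    (A : Matrix m m 𝕜) : ℝ :=
  sSup {r : ℝ | ∃ v : EuclideanSpace 𝕜 m, ‖v‖ = 1 ∧ r = ‖Matrix.toEuclideanLin A v‖}

/-- `Xs` is a spectral (best) approximation of `Y` from the subspace `𝒳`. -/
def IsSpectralApprox {m : Type*} [Fintype m] [DecidableEq m]
    (𝒳 : Submodule 𝕜 (Matrix m m 𝕜)) (Y Xs : Matrix m m 𝕜) : Prop :=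
  Xs ∈ 𝒳 ∧ ∀ X ∈ 𝒳, specNorm (Y - Xs) ≤ specNorm (Y - X)

/-- The span of the maximal right singular vectors of `M`. -/
noncomputable def maxRSV {m : Type*} [Fintype m] [DecidableEq m]
    (M : Matrix m m 𝕜) : Submodule 𝕜 (EuclideanSpace 𝕜 m) :=
  Submodule.span 𝕜 {v : EuclideanSpace 𝕜 m | ‖v‖ = 1 ∧ ‖Matrix.toEuclideanLin M v‖ = specNorm M}

/-- The `k`-dimensional field of the `k` matrices `A 0, …, A (k-1)` restricted to
the subspace `S`. -/
def kField {m : Type*} [Fintype m] [DecidableEq m] {k : ℕ}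
    (A : Fin k → Matrix m m 𝕜) (S : Submodule 𝕜 (EuclideanSpace 𝕜 m)) : Set (Fin k → 𝕜) :=
  {w | ∃ v : EuclideanSpace 𝕜 m, v ∈ S ∧ ‖v‖ = 1 ∧
     w = fun i => (inner 𝕜 v (Matrix.toEuclideanLin (A i) v) : 𝕜)}

/-- min-max value -/
noncomputable def minMaxVal {m : Type*} [Fintype m] [DecidableEq m]
    (𝒳 : Submodule 𝕜 (Matrix m m 𝕜)) (Y : Matrix m m 𝕜) : ℝ :=
  sInf {r : ℝ | ∃ X ∈ 𝒳, r = specNorm (Y - X)}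

/-- max-min value -/
noncomputable def maxMinVal {m : Type*} [Fintype m] [DecidableEq m]
    (𝒳 : Submodule 𝕜 (Matrix m m 𝕜)) (Y : Matrix m m 𝕜) : ℝ :=
  sSup {r : ℝ | ∃ v : EuclideanSpace 𝕜 m, ‖v‖ = 1 ∧
    r = sInf {s : ℝ | ∃ X ∈ 𝒳, s = ‖Matrix.toEuclideanLin (Y - X) v‖}}

/-- dual norm of a linear functional w.r.t. the spectral norm -/
noncomputable def dualNorm {m : Type*} [Fintype m] [DecidableEq m]
    (f : Matrix m m 𝕜 →ₗ[𝕜] 𝕜) : ℝ :=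
  sSup {r : ℝ | ∃ A : Matrix m m 𝕜, specNorm A = 1 ∧ r = ‖f A‖}

/-- the rank one matrix `u vᴴ` -/
def outer {m : Type*} (u v : EuclideanSpace 𝕜 m) : Matrix m m 𝕜 :=
  Matrix.of fun i j => u i * star (v j)

/-- nuclear (Schatten 1) norm: the sum of the singular values -/
noncomputable def nuclearNorm {m : Type*} [Fintype m] [DecidableEq m]
    (F : Matrix m m 𝕜) : ℝ :=
  ∑ i, Real.sqrt ((Matrix.isHermitian_conjTranspose_mul_self F).eigenvalues i)


section Aux
variable {n : ℕ}

local notation "E𝕜" => EuclideanSpace 𝕜 (Fin n)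



noncomputable abbrev Lm (A : Matrix (Fin n) (Fin n) 𝕜) : E𝕜 →ₗ[𝕜] E𝕜 :=
  Matrix.toEuclideanLin A

def specSet (A : Matrix (Fin n) (Fin n) 𝕜) : Set ℝ :=
  {r : ℝ | ∃ v : E𝕜, ‖v‖ = 1 ∧ r = ‖Lm A v‖}

lemma specNorm_eq (A : Matrix (Fin n) (Fin n) 𝕜) : specNorm A = sSup (specSet A) := rfl

lemma Lm_mul (A B : Matrix (Fin n) (Fin n) 𝕜) (v : E𝕜) : Lm (A * B) v = Lm A (Lm B v) := by
  simp [Matrix.toEuclideanLin_apply, Matrix.mulVec_mulVec]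

lemma specSet_nonempty [Nonempty (Fin n)] (A : Matrix (Fin n) (Fin n) 𝕜) :
    (specSet A).Nonempty := by
  refine ⟨_, ⟨EuclideanSpace.single (Classical.arbitrary _) 1, by simp, rfl⟩⟩

lemma specSet_bddAbove (A : Matrix (Fin n) (Fin n) 𝕜) : BddAbove (specSet A) := by
  refine ⟨‖(Lm A).toContinuousLinearMap‖, ?_⟩
  rintro r ⟨v, hv, rfl⟩
  calc ‖Lm A v‖ = ‖(Lm A).toContinuousLinearMap v‖ := rfl
    _ ≤ ‖(Lm A).toContinuousLinearMap‖ * ‖v‖ := (Lm A).toContinuousLinearMap.le_opNorm v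
    _ = ‖(Lm A).toContinuousLinearMap‖ := by rw [hv, mul_one]

lemma norm_Lm_le_specNorm (A : Matrix (Fin n) (Fin n) 𝕜) {v : E𝕜} (hv : ‖v‖ = 1) :
    ‖Lm A v‖ ≤ specNorm A :=
  le_csSup (specSet_bddAbove A) ⟨v, hv, rfl⟩

lemma specNorm_nonneg [Nonempty (Fin n)] (A : Matrix (Fin n) (Fin n) 𝕜) :
    0 ≤ specNorm A := by
  obtain ⟨r, v, hv, rfl⟩ := specSet_nonempty A
  exact le_trans (norm_nonneg _) (norm_Lm_le_specNorm A hv)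

lemma norm_Lm_le_specNorm_mul [Nonempty (Fin n)] (A : Matrix (Fin n) (Fin n) 𝕜) (v : E𝕜) :
    ‖Lm A v‖ ≤ specNorm A * ‖v‖ := by
  rcases eq_or_ne v 0 with rfl | hv
  · simp
  · have hn : ‖v‖ ≠ 0 := norm_ne_zero_iff.2 hv
    have h1 : ‖(‖v‖⁻¹ : 𝕜) • v‖ = 1 := by
      rw [norm_smul]
      simp [abs_of_nonneg, inv_mul_cancel₀ hn]
    have := norm_Lm_le_specNorm A h1
    rw [_root_.map_smul, norm_smul] at this
    simp only [RCLike.norm_ofNat, norm_inv, RCLike.norm_ofReal, abs_norm] at this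
    rw [inv_mul_le_iff₀ (lt_of_le_of_ne (norm_nonneg v) (Ne.symm hn))] at this
    linarith [this]

lemma specNorm_le [Nonempty (Fin n)] (A : Matrix (Fin n) (Fin n) 𝕜) {c : ℝ}
    (h : ∀ v : E𝕜, ‖v‖ = 1 → ‖Lm A v‖ ≤ c) : specNorm A ≤ c := by
  refine csSup_le (specSet_nonempty A) ?_
  rintro r ⟨v, hv, rfl⟩
  exact h v hv

lemma specNorm_pos [Nonempty (Fin n)] (A : Matrix (Fin n) (Fin n) 𝕜) (hA : A ≠ 0) :
    0 < specNorm A := by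
  rcases lt_or_eq_of_le (specNorm_nonneg A) with h | h
  · exact h
  exfalso
  apply hA
  have hL : Lm A = 0 := by
    refine LinearMap.ext fun v => ?_
    have h2 := norm_Lm_le_specNorm_mul A v
    rw [← h] at h2
    simp only [zero_mul] at h2
    have h3 : ‖Lm A v‖ = 0 := le_antisymm h2 (norm_nonneg _)
    simpa [norm_eq_zero] using h3
  have := (Matrix.toEuclideanLin (𝕜 := 𝕜) (m := Fin n) (n := Fin n)).injective
  exact this (by simpa using hL)

open RCLike in
/-- positive symmetric operator with zero quadratic form at `g` kills `g` -/
lemma psd_kernel {E : Type*} [NormedAddCommGroup E] [InnerProductSpace 𝕜 E]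
    (S : E →ₗ[𝕜] E) (hsymm : ∀ x y : E, (inner 𝕜 (S x) y : 𝕜) = inner 𝕜 x (S y))
    (hpos : ∀ x : E, 0 ≤ re (inner 𝕜 x (S x) : 𝕜)) {g : E}
    (hg : re (inner 𝕜 g (S g) : 𝕜) = 0) : S g = 0 := by
  by_contra hne
  have hns : 0 < ‖S g‖ ^ 2 := by
    have : ‖S g‖ ≠ 0 := norm_ne_zero_iff.2 hne
    positivity
  set c : ℝ := re (inner 𝕜 (S g) (S (S g)) : 𝕜) with hc
  have hc0 : 0 ≤ c := hpos (S g)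
  have key : ∀ t : ℝ, 0 ≤ -(2 * t * ‖S g‖^2) + t^2 * c := by
    intro t
    have h0 := hpos (g - (t : 𝕜) • S g)
    have hexp : (inner 𝕜 (g - (t:𝕜) • S g) (S (g - (t:𝕜) • S g)) : 𝕜)
        = inner 𝕜 g (S g) - (t:𝕜) * (inner 𝕜 g (S (S g)) + inner 𝕜 (S g) (S g))
          + (t:𝕜) * ((t:𝕜) * inner 𝕜 (S g) (S (S g))) := by
      rw [map_sub, _root_.map_smul, inner_sub_left, inner_sub_right, inner_sub_right,
        inner_smul_left, inner_smul_right, inner_smul_left, inner_smul_right, conj_ofReal]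
      ring
    have hsg : (inner 𝕜 g (S (S g)) : 𝕜) = inner 𝕜 (S g) (S g) := (hsymm g (S g)).symm
    rw [hexp, hsg] at h0
    have : re ((inner 𝕜 g (S g) : 𝕜) - (t:𝕜) * ((inner 𝕜 (S g) (S g) : 𝕜) + inner 𝕜 (S g) (S g))
          + (t:𝕜) * ((t:𝕜) * inner 𝕜 (S g) (S (S g))))
        = re (inner 𝕜 g (S g) : 𝕜) - t * (re (inner 𝕜 (S g) (S g) : 𝕜) + re (inner 𝕜 (S g) (S g) : 𝕜))
          + t * (t * re (inner 𝕜 (S g) (S (S g)) : 𝕜)) := by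
      rw [map_add, map_sub, re_ofReal_mul, re_ofReal_mul, re_ofReal_mul, map_add]
    rw [this, hg, inner_self_eq_norm_sq] at h0
    nlinarith [h0]
  have hcp : (0:ℝ) < c + 1 := by linarith
  set t : ℝ := ‖S g‖^2 / (c + 1) with hts
  have ht : 0 < t := div_pos hns hcp
  have htc : t * c ≤ ‖S g‖^2 := by
    rw [hts, div_mul_eq_mul_div, div_le_iff₀ hcp]
    nlinarith [hns, hc0]
  have h4 : t * (t * c) ≤ t * ‖S g‖^2 := mul_le_mul_of_nonneg_left htc ht.le
  have h5 := key t
  nlinarith [mul_pos ht hns]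

open RCLike in
lemma quad_form (M : Matrix (Fin n) (Fin n) 𝕜) (x : E𝕜) :
    re (inner 𝕜 x (Lm (Mᴴ * M) x) : 𝕜) = ‖Lm M x‖^2 := by
  have h1 : Lm (Mᴴ * M) x = LinearMap.adjoint (Lm M) (Lm M x) := by
    rw [Lm_mul]
    rw [show Lm (Mᴴ) = LinearMap.adjoint (Lm M) from Matrix.toEuclideanLin_conjTranspose_eq_adjoint M]
  rw [h1, LinearMap.adjoint_inner_right, inner_self_eq_norm_sq]

open RCLike in
lemma unit_mem_maxRSV_norm [Nonempty (Fin n)] (M : Matrix (Fin n) (Fin n) 𝕜)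
    {v : E𝕜} (hv : ‖v‖ = 1) (hmem : v ∈ maxRSV M) : ‖Lm M v‖ = specNorm M := by
  set σ : ℝ := specNorm M with hσ
  have hσ0 : 0 ≤ σ := specNorm_nonneg M
  set S : E𝕜 →ₗ[𝕜] E𝕜 := ((σ^2 : ℝ) : 𝕜) • LinearMap.id - Lm (Mᴴ * M) with hS
  have hSapp : ∀ x : E𝕜, S x = ((σ^2 : ℝ) : 𝕜) • x - Lm (Mᴴ * M) x := fun x => rfl
  have hadj : ∀ x y : E𝕜, (inner 𝕜 x (Lm (Mᴴ * M) y) : 𝕜) = inner 𝕜 (Lm M x) (Lm M y) := by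
    intro x y
    rw [Lm_mul,
      show Lm (Mᴴ) = LinearMap.adjoint (Lm M) from Matrix.toEuclideanLin_conjTranspose_eq_adjoint M,
      LinearMap.adjoint_inner_right]
  have hadj2 : ∀ x y : E𝕜, (inner 𝕜 (Lm (Mᴴ * M) x) y : 𝕜) = inner 𝕜 (Lm M x) (Lm M y) := by
    intro x y
    rw [← inner_conj_symm, hadj y x, ← inner_conj_symm (Lm M x)]
  have hsymm : ∀ x y : E𝕜, (inner 𝕜 (S x) y : 𝕜) = inner 𝕜 x (S y) := by
    intro x y
    rw [hSapp, hSapp, inner_sub_left, inner_sub_right, inner_smul_left, inner_smul_right,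
      conj_ofReal, hadj x y, hadj2 x y]
  have hquad : ∀ x : E𝕜, re (inner 𝕜 x (S x) : 𝕜) = σ^2 * ‖x‖^2 - ‖Lm M x‖^2 := by
    intro x
    rw [hSapp, inner_sub_right, map_sub, inner_smul_right, re_ofReal_mul, inner_self_eq_norm_sq,
      quad_form]
  have hpos : ∀ x : E𝕜, 0 ≤ re (inner 𝕜 x (S x) : 𝕜) := by
    intro x
    rw [hquad]
    have h1 : ‖Lm M x‖ ≤ σ * ‖x‖ := norm_Lm_le_specNorm_mul M x
    nlinarith [norm_nonneg (Lm M x), norm_nonneg x, mul_nonneg hσ0 (norm_nonneg x)]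
  have hker : maxRSV M ≤ LinearMap.ker S := by
    rw [maxRSV, Submodule.span_le]
    rintro g ⟨hg1, hg2⟩
    simp only [SetLike.mem_coe, LinearMap.mem_ker]
    refine psd_kernel S hsymm hpos ?_
    rw [hquad, hg1, hg2]
    ring
  have hSv : S v = 0 := hker hmem
  have h0 : re (inner 𝕜 v (S v) : 𝕜) = 0 := by rw [hSv, inner_zero_right, map_zero]
  rw [hquad, hv] at h0
  have hsq : ‖Lm M v‖^2 = σ^2 := by nlinarith [h0]
  have := congrArg Real.sqrt hsq
  rwa [Real.sqrt_sq (norm_nonneg _), Real.sqrt_sq hσ0] at this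

open RCLike in
set_option maxHeartbeats 1000000 in
lemma perturb [Nonempty (Fin n)] (M E : Matrix (Fin n) (Fin n) 𝕜) (hM : M ≠ 0) {δ : ℝ}
    (hδ : 0 < δ)
    (h : ∀ v : E𝕜, ‖v‖ = 1 → v ∈ maxRSV M → δ ≤ re (inner 𝕜 (Lm M v) (Lm E v) : 𝕜)) :
    ∃ t : ℝ, 0 < t ∧ specNorm (M - ((t:ℝ) : 𝕜) • E) < specNorm M := by
  set σ : ℝ := specNorm M with hσdef
  have hσ : 0 < σ := specNorm_pos M hM
  set CE : ℝ := specNorm E + 1 with hCE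
  have hCE0 : 0 < CE := by
    have := specNorm_nonneg E
    linarith
  have hEv : ∀ v : E𝕜, ‖v‖ = 1 → ‖Lm E v‖ ≤ CE := by
    intro v hv
    have := norm_Lm_le_specNorm E hv
    linarith
  clear_value σ CE
  have hcM : Continuous fun v : E𝕜 => Lm M v := (Lm M).continuous_of_finiteDimensional
  have hcE : Continuous fun v : E𝕜 => Lm E v := (Lm E).continuous_of_finiteDimensional
  have hcip : Continuous fun v : E𝕜 => re (inner 𝕜 (Lm M v) (Lm E v) : 𝕜) :=
    RCLike.continuous_re.comp (Continuous.inner hcM hcE)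
  obtain ⟨σ', hσ'0, hσ'lt, hσ'bd⟩ :
      ∃ σ' : ℝ, 0 ≤ σ' ∧ σ' < σ ∧
        ∀ v : E𝕜, ‖v‖ = 1 → re (inner 𝕜 (Lm M v) (Lm E v) : 𝕜) ≤ δ/2 → ‖Lm M v‖ ≤ σ' := by
    set K : Set E𝕜 := {v | ‖v‖ = 1 ∧ re (inner 𝕜 (Lm M v) (Lm E v) : 𝕜) ≤ δ/2} with hKdef
    rcases K.eq_empty_or_nonempty with hKe | hKne
    · refine ⟨σ/2, by linarith, by linarith, fun v hv1 hv2 =>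
        absurd (show v ∈ K from ⟨hv1, hv2⟩) (by simp [hKe])⟩
    · have hKcl : IsClosed K := by
        have h1 : IsClosed {v : E𝕜 | ‖v‖ = 1} :=
          isClosed_eq continuous_norm continuous_const
        have h2 : IsClosed {v : E𝕜 | re (inner 𝕜 (Lm M v) (Lm E v) : 𝕜) ≤ δ/2} :=
          isClosed_le hcip continuous_const
        exact h1.inter h2
      have hKsub : K ⊆ Metric.sphere (0 : E𝕜) 1 := by
        rintro v ⟨hv, -⟩
        simpa [mem_sphere_zero_iff_norm] using hv
      have hKcp : IsCompact K :=
        IsCompact.of_isClosed_subset (isCompact_sphere (0 : E𝕜) 1) hKcl hKsub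
      obtain ⟨v0, hv0K, hv0max⟩ :=
        hKcp.exists_isMaxOn hKne ((continuous_norm.comp hcM).continuousOn)
      refine ⟨‖Lm M v0‖, norm_nonneg _, ?_, fun v hv1 hv2 => hv0max ⟨hv1, hv2⟩⟩
      have hle : ‖Lm M v0‖ ≤ σ := (norm_Lm_le_specNorm M hv0K.1).trans_eq hσdef.symm
      rcases lt_or_eq_of_le hle with hlt | heq
      · exact hlt
      · exfalso
        have hmem : v0 ∈ maxRSV M :=
          Submodule.subset_span ⟨hv0K.1, heq.trans hσdef⟩
        have h5 := h v0 hv0K.1 hmem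
        have h6 := hv0K.2
        linarith
  obtain ⟨t, ht, htA, htB⟩ : ∃ t : ℝ, 0 < t ∧ t * CE ≤ (σ - σ')/2 ∧ t * CE^2 ≤ δ/4 := by
    have h2CE : (0:ℝ) < 2*CE := by linarith
    have h4CE : (0:ℝ) < 4*CE^2 := by nlinarith
    refine ⟨min ((σ - σ')/(2*CE)) (δ/(4*CE^2)), lt_min (div_pos (by linarith) h2CE)
      (div_pos hδ h4CE), ?_, ?_⟩
    · have h1 : min ((σ - σ')/(2*CE)) (δ/(4*CE^2)) ≤ (σ - σ')/(2*CE) := min_le_left _ _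
      have h2 : (σ - σ')/(2*CE)*CE = (σ-σ')/2 := by
        field_simp
      nlinarith [mul_le_mul_of_nonneg_right h1 hCE0.le]
    · have h1 : min ((σ - σ')/(2*CE)) (δ/(4*CE^2)) ≤ δ/(4*CE^2) := min_le_right _ _
      have h2 : δ/(4*CE^2)*CE^2 = δ/4 := by
        field_simp
      nlinarith [mul_le_mul_of_nonneg_right h1 (sq_nonneg CE)]
  refine ⟨t, ht, ?_⟩
  have happly : ∀ v : E𝕜, Lm (M - ((t:ℝ):𝕜) • E) v = Lm M v - ((t:ℝ):𝕜) • Lm E v := by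
    intro v
    have hL2 : Matrix.toEuclideanLin (M - ((t:ℝ):𝕜) • E)
        = Matrix.toEuclideanLin M - ((t:ℝ):𝕜) • Matrix.toEuclideanLin E := by
      rw [map_sub, _root_.map_smul]
    show Matrix.toEuclideanLin (M - ((t:ℝ):𝕜) • E) v = _
    rw [hL2]
    rfl
  have hnorm_t : ‖((t:ℝ):𝕜)‖ = t := by
    rw [RCLike.norm_ofReal, abs_of_pos ht]
  have hbd : specNorm (M - ((t:ℝ):𝕜) • E) ≤ max ((σ + σ')/2) (Real.sqrt (σ^2 - t*δ/2)) := by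
    apply specNorm_le
    intro v hv
    rw [happly]
    by_cases hvK : re (inner 𝕜 (Lm M v) (Lm E v) : 𝕜) ≤ δ/2
    · have hK1 : ‖Lm M v‖ ≤ σ' := hσ'bd v hv hvK
      have htri : ‖Lm M v - ((t:ℝ):𝕜) • Lm E v‖ ≤ ‖Lm M v‖ + t * ‖Lm E v‖ := by
        calc ‖Lm M v - ((t:ℝ):𝕜) • Lm E v‖ ≤ ‖Lm M v‖ + ‖((t:ℝ):𝕜) • Lm E v‖ :=
              norm_sub_le _ _
          _ = ‖Lm M v‖ + t * ‖Lm E v‖ := by rw [norm_smul, hnorm_t]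
      have h2 : t * ‖Lm E v‖ ≤ t * CE := mul_le_mul_of_nonneg_left (hEv v hv) ht.le
      refine le_trans (by linarith : ‖Lm M v - ((t:ℝ):𝕜) • Lm E v‖ ≤ (σ + σ')/2)
        (le_max_left _ _)
    · push_neg at hvK
      have hsq : ‖Lm M v - ((t:ℝ):𝕜) • Lm E v‖^2
          = ‖Lm M v‖^2 - 2 * (t * re (inner 𝕜 (Lm M v) (Lm E v) : 𝕜)) + t^2 * ‖Lm E v‖^2 := by
        rw [@norm_sub_sq 𝕜, inner_smul_right, norm_smul, hnorm_t, re_ofReal_mul]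
        ring
      have hMv : ‖Lm M v‖ ≤ σ := (norm_Lm_le_specNorm M hv).trans_eq hσdef.symm
      have hEv' : ‖Lm E v‖ ≤ CE := hEv v hv
      have h4 : t^2 * ‖Lm E v‖^2 ≤ t * (δ/4) := by
        have h5 : t^2 * ‖Lm E v‖^2 ≤ t^2 * CE^2 := by
          apply mul_le_mul_of_nonneg_left _ (by positivity)
          exact pow_le_pow_left₀ (norm_nonneg _) hEv' 2
        nlinarith [h5, mul_le_mul_of_nonneg_left htB ht.le]
      have hfin : ‖Lm M v - ((t:ℝ):𝕜) • Lm E v‖^2 ≤ σ^2 - t*δ/2 := by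
        rw [hsq]
        nlinarith [hMv, norm_nonneg (Lm M v), hvK, ht, h4]
      refine le_trans ?_ (le_max_right _ _)
      rw [Real.le_sqrt (norm_nonneg _) (le_trans (by positivity) hfin)]
      exact hfin
  have hblt : max ((σ + σ')/2) (Real.sqrt (σ^2 - t*δ/2)) < σ := by
    apply max_lt
    · linarith
    · rw [Real.sqrt_lt' hσ]
      nlinarith [ht, hδ]
  linarith [hbd, hblt]

open RCLike in
lemma functional_rep {k : ℕ} (f : (Fin k → 𝕜) →L[ℝ] ℝ) :
    ∃ d : Fin k → 𝕜, ∀ w : Fin k → 𝕜, f w = ∑ i, re (d i * w i) := by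
  refine ⟨fun i => ((f (Pi.single i 1) : ℝ) : 𝕜) - ((f (Pi.single i I) : ℝ) : 𝕜) * I,
    fun w => ?_⟩
  conv_lhs => rw [← Finset.univ_sum_single w, map_sum]
  refine Finset.sum_congr rfl fun i _ => ?_
  have h1 : w i = re (w i) • (1:𝕜) + im (w i) • (I:𝕜) := by
    rw [real_smul_eq_coe_mul, real_smul_eq_coe_mul, mul_one]
    exact (re_add_im _).symm
  have hsplit : Pi.single i (w i)
      = re (w i) • (Pi.single i (1 : 𝕜) : Fin k → 𝕜) + im (w i) • (Pi.single i (I : 𝕜) : Fin k → 𝕜) := by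
    rw [← Pi.single_smul, ← Pi.single_smul, ← Pi.single_add, ← h1]
  rw [hsplit, map_add, f.map_smul, f.map_smul]
  simp only [smul_eq_mul]
  rw [sub_mul, map_sub, mul_assoc]
  rw [re_ofReal_mul, re_ofReal_mul, I_mul_re]
  ring

open RCLike in
set_option maxHeartbeats 1000000 in
lemma zero_mem_kField {k : ℕ} [Nonempty (Fin n)] (X : Fin k → Matrix (Fin n) (Fin n) 𝕜)
    (Y Xs : Matrix (Fin n) (Fin n) 𝕜) (hM : Y - Xs ≠ 0)
    (hXs : Xs ∈ Submodule.span 𝕜 (Set.range X))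
    (hopt : ∀ Z ∈ Submodule.span 𝕜 (Set.range X), specNorm (Y - Xs) ≤ specNorm (Y - Z))
    (hconv : Convex ℝ (kField (fun i => (Y - Xs)ᴴ * X i) (maxRSV (Y - Xs)))) :
    (0 : Fin k → 𝕜) ∈ kField (fun i => (Y - Xs)ᴴ * X i) (maxRSV (Y - Xs)) := by
  by_contra h0
  set M := Y - Xs with hMdef
  set A : Fin k → Matrix (Fin n) (Fin n) 𝕜 := fun i => Mᴴ * X i with hAdef
  set F := kField A (maxRSV M) with hFdef
  have hFcl : IsClosed F := by
    have himg : F = (fun v : E𝕜 => fun i => (inner 𝕜 v (Lm (A i) v) : 𝕜)) ''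
        {v : E𝕜 | v ∈ maxRSV M ∧ ‖v‖ = 1} := by
      ext w
      constructor
      · rintro ⟨v, h1, h2, h3⟩
        exact ⟨v, ⟨h1, h2⟩, h3.symm⟩
      · rintro ⟨v, ⟨h1, h2⟩, h3⟩
        exact ⟨v, h1, h2, h3.symm⟩
    rw [himg]
    have hScl : IsClosed {v : E𝕜 | v ∈ maxRSV M ∧ ‖v‖ = 1} :=
      ((maxRSV M).closed_of_finiteDimensional).inter
        (isClosed_eq continuous_norm continuous_const)
    have hSsub : {v : E𝕜 | v ∈ maxRSV M ∧ ‖v‖ = 1} ⊆ Metric.sphere (0 : E𝕜) 1 := by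
      rintro v ⟨-, hv⟩
      simpa [mem_sphere_zero_iff_norm] using hv
    have hScp : IsCompact {v : E𝕜 | v ∈ maxRSV M ∧ ‖v‖ = 1} :=
      IsCompact.of_isClosed_subset (isCompact_sphere (0 : E𝕜) 1) hScl hSsub
    have hid : Continuous fun v : E𝕜 => v := continuous_id
    have hcont : Continuous fun v : E𝕜 => (fun i => (inner 𝕜 v (Lm (A i) v) : 𝕜)) :=
      continuous_pi fun i =>
        Continuous.inner hid ((Lm (A i)).continuous_of_finiteDimensional)
    exact (hScp.image hcont).isClosed
  obtain ⟨f, u, hf0, hsep⟩ := _root_.geometric_hahn_banach_point_closed hconv hFcl h0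
  have hu : 0 < u := by simpa using hf0
  obtain ⟨d, hd⟩ := functional_rep f
  set Em := ∑ i, d i • X i with hEm
  have hEmem : Em ∈ Submodule.span 𝕜 (Set.range X) :=
    Submodule.sum_mem _ fun i _ => Submodule.smul_mem _ _ (Submodule.subset_span ⟨i, rfl⟩)
  have hkey : ∀ v : E𝕜, ‖v‖ = 1 → v ∈ maxRSV M → u ≤ re (inner 𝕜 (Lm M v) (Lm Em v) : 𝕜) := by
    intro v hv hmem
    have hwF : (fun i => (inner 𝕜 v (Lm (A i) v) : 𝕜)) ∈ F := ⟨v, hmem, hv, rfl⟩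
    have hlt := hsep _ hwF
    rw [hd] at hlt
    have hcalc : re (inner 𝕜 (Lm M v) (Lm Em v) : 𝕜)
        = ∑ i, re (d i * (inner 𝕜 v (Lm (A i) v) : 𝕜)) := by
      have h1 : (inner 𝕜 (Lm M v) (Lm Em v) : 𝕜) = inner 𝕜 v (Lm (Mᴴ * Em) v) := by
        rw [Lm_mul, show Lm (Mᴴ) = LinearMap.adjoint (Lm M) from
          Matrix.toEuclideanLin_conjTranspose_eq_adjoint M, LinearMap.adjoint_inner_right]
      have h2 : Mᴴ * Em = ∑ i, d i • A i := by
        rw [hEm, Finset.mul_sum]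
        exact Finset.sum_congr rfl fun i _ => mul_smul_comm _ _ _
      have h3 : Lm (∑ i, d i • A i) v = ∑ i, d i • Lm (A i) v := by
        have h4 : Matrix.toEuclideanLin (∑ i, d i • A i)
            = ∑ i, d i • Matrix.toEuclideanLin (A i) := by
          rw [map_sum]
          exact Finset.sum_congr rfl fun i _ => _root_.map_smul _ _ _
        show Matrix.toEuclideanLin (∑ i, d i • A i) v = _
        rw [h4]
        simp [LinearMap.sum_apply]
      rw [h1, h2, h3, inner_sum, map_sum]
      exact Finset.sum_congr rfl fun i _ => by rw [inner_smul_right]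
    rw [hcalc]
    linarith
  obtain ⟨t, ht, hlt⟩ := perturb M Em hM hu hkey
  have hmem2 : Xs + ((t:ℝ):𝕜) • Em ∈ Submodule.span 𝕜 (Set.range X) :=
    Submodule.add_mem _ hXs (Submodule.smul_mem _ _ hEmem)
  have hge := hopt _ hmem2
  rw [show Y - (Xs + ((t:ℝ):𝕜) • Em) = M - ((t:ℝ):𝕜) • Em from sub_add_eq_sub_sub Y Xs _] at hge
  linarith

end Aux

theorem stmt14 {n k : ℕ} (X : Fin k → Matrix (Fin n) (Fin n) 𝕜)
    (hdim : Module.finrank 𝕜 (Submodule.span 𝕜 (Set.range X)) = k)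
    (Y Xs : Matrix (Fin n) (Fin n) 𝕜)
    (hY : Y ∉ Submodule.span 𝕜 (Set.range X))
    (happrox : IsSpectralApprox (Submodule.span 𝕜 (Set.range X)) Y Xs)
    (hconv : Convex ℝ (kField (fun i => (Y - Xs)ᴴ * X i) (maxRSV (Y - Xs)))) :
    maxMinVal (Submodule.span 𝕜 (Set.range X)) Y
      = minMaxVal (Submodule.span 𝕜 (Set.range X)) Y := by
  classical
  rcases Nat.eq_zero_or_pos n with hn | hn
  · exfalso
    apply hY
    subst hn
    have hY0 : Y = 0 := by
      ext i j
      exact i.elim0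
    rw [hY0]
    exact Submodule.zero_mem _
  haveI : Nonempty (Fin n) := ⟨⟨0, hn⟩⟩
  obtain ⟨hXs, hopt⟩ := happrox
  have hM : Y - Xs ≠ 0 := by
    intro h
    rw [sub_eq_zero] at h
    exact hY (h ▸ hXs)
  set σ : ℝ := specNorm (Y - Xs) with hσdef
  have hσ0 : 0 ≤ σ := specNorm_nonneg (Y - Xs)
  -- `minMaxVal = σ`
  have hT1mem : σ ∈ {r : ℝ | ∃ Z ∈ Submodule.span 𝕜 (Set.range X), r = specNorm (Y - Z)} :=
    ⟨Xs, hXs, rfl⟩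
  have hT1lb : ∀ r ∈ {r : ℝ | ∃ Z ∈ Submodule.span 𝕜 (Set.range X), r = specNorm (Y - Z)},
      σ ≤ r := by
    rintro r ⟨Z, hZ, rfl⟩
    exact hopt Z hZ
  have hmin : minMaxVal (Submodule.span 𝕜 (Set.range X)) Y = σ :=
    le_antisymm (csInf_le ⟨σ, hT1lb⟩ hT1mem) (le_csInf ⟨σ, hT1mem⟩ hT1lb)
  -- the inner 𝕜 infimum sets
  have hinner_mem : ∀ v : EuclideanSpace 𝕜 (Fin n),
      ‖Matrix.toEuclideanLin (Y - Xs) v‖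
        ∈ {s : ℝ | ∃ Z ∈ Submodule.span 𝕜 (Set.range X),
            s = ‖Matrix.toEuclideanLin (Y - Z) v‖} := fun v => ⟨Xs, hXs, rfl⟩
  have hinner_bdd : ∀ v : EuclideanSpace 𝕜 (Fin n),
      BddBelow {s : ℝ | ∃ Z ∈ Submodule.span 𝕜 (Set.range X),
        s = ‖Matrix.toEuclideanLin (Y - Z) v‖} := by
    intro v
    refine ⟨0, ?_⟩
    rintro s ⟨Z, hZ, rfl⟩
    exact norm_nonneg _
  -- maxMinVal ≤ σ
  have hout_bdd : ∀ r ∈ {r : ℝ | ∃ v : EuclideanSpace 𝕜 (Fin n), ‖v‖ = 1 ∧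
      r = sInf {s : ℝ | ∃ Z ∈ Submodule.span 𝕜 (Set.range X),
        s = ‖Matrix.toEuclideanLin (Y - Z) v‖}}, r ≤ σ := by
    rintro r ⟨v, hv, rfl⟩
    refine le_trans (csInf_le (hinner_bdd v) (hinner_mem v)) ?_
    exact norm_Lm_le_specNorm (Y - Xs) hv
  have hout_mem : sInf {s : ℝ | ∃ Z ∈ Submodule.span 𝕜 (Set.range X),
        s = ‖Matrix.toEuclideanLin (Y - Z) (EuclideanSpace.single (⟨0, hn⟩ : Fin n) (1:𝕜))‖}
      ∈ {r : ℝ | ∃ v : EuclideanSpace 𝕜 (Fin n), ‖v‖ = 1 ∧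
        r = sInf {s : ℝ | ∃ Z ∈ Submodule.span 𝕜 (Set.range X),
          s = ‖Matrix.toEuclideanLin (Y - Z) v‖}} :=
    ⟨EuclideanSpace.single (⟨0, hn⟩ : Fin n) (1:𝕜), by simp, rfl⟩
  -- the special maximal right singular vector with vanishing cross terms
  obtain ⟨v, hvmem, hv1, h0eq⟩ := zero_mem_kField X Y Xs hM hXs hopt hconv
  have hcross : ∀ W ∈ Submodule.span 𝕜 (Set.range X),
      (inner 𝕜 v (Matrix.toEuclideanLin ((Y - Xs)ᴴ * W) v) : 𝕜) = 0 := by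
    intro W hW
    induction hW using Submodule.span_induction with
    | mem x hx =>
      obtain ⟨i, rfl⟩ := hx
      exact (congrFun h0eq i).symm
    | zero => simp
    | add x y hx hy hpx hpy =>
      rw [mul_add, map_add, LinearMap.add_apply, inner_add_right, hpx, hpy, add_zero]
    | smul a x hx hpx =>
      rw [mul_smul_comm, _root_.map_smul, LinearMap.smul_apply, inner_smul_right, hpx, mul_zero]
  have hMv : ‖Matrix.toEuclideanLin (Y - Xs) v‖ = σ :=
    unit_mem_maxRSV_norm (Y - Xs) hv1 hvmem
  have hlow : ∀ Z ∈ Submodule.span 𝕜 (Set.range X),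
      σ ≤ ‖Matrix.toEuclideanLin (Y - Z) v‖ := by
    intro Z hZ
    have hW : Z - Xs ∈ Submodule.span 𝕜 (Set.range X) := Submodule.sub_mem _ hZ hXs
    have hc := hcross (Z - Xs) hW
    have h1 : (inner 𝕜 v (Lm ((Y - Xs)ᴴ * (Z - Xs)) v) : 𝕜)
        = inner 𝕜 (Lm (Y - Xs) v) (Lm (Z - Xs) v) := by
      rw [Lm_mul, show Lm ((Y - Xs)ᴴ) = LinearMap.adjoint (Lm (Y - Xs)) from
        Matrix.toEuclideanLin_conjTranspose_eq_adjoint _, LinearMap.adjoint_inner_right]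
    have hc2 : (inner 𝕜 (Lm (Y - Xs) v) (Lm (Z - Xs) v) : 𝕜) = 0 := by
      rw [← h1]
      exact hc
    have hdecomp : Lm (Y - Z) v = Lm (Y - Xs) v - Lm (Z - Xs) v := by
      have he : (Y - Z) = (Y - Xs) - (Z - Xs) := by abel
      rw [he]
      show Matrix.toEuclideanLin ((Y - Xs) - (Z - Xs)) v = _
      rw [map_sub]
      rfl
    have hsq : σ^2 ≤ ‖Lm (Y - Z) v‖^2 := by
      have : ‖Lm (Y - Z) v‖^2
          = ‖Lm (Y - Xs) v‖^2 - 2 * RCLike.re ((inner 𝕜 (Lm (Y - Xs) v) (Lm (Z - Xs) v)) : 𝕜)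
            + ‖Lm (Z - Xs) v‖^2 := by
        rw [hdecomp]
        exact @norm_sub_sq 𝕜 _ _ _ _ _ _
      rw [this, hc2, hMv, map_zero]
      nlinarith [sq_nonneg ‖Lm (Z - Xs) v‖]
    have hr := Real.sqrt_le_sqrt hsq
    rwa [Real.sqrt_sq hσ0, Real.sqrt_sq (norm_nonneg _)] at hr
  have hvElem : σ ≤ sInf {s : ℝ | ∃ Z ∈ Submodule.span 𝕜 (Set.range X),
      s = ‖Matrix.toEuclideanLin (Y - Z) v‖} := by
    refine le_csInf ⟨_, hinner_mem v⟩ ?_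
    rintro s ⟨Z, hZ, rfl⟩
    exact hlow Z hZ
  have hle2 : sInf {s : ℝ | ∃ Z ∈ Submodule.span 𝕜 (Set.range X),
        s = ‖Matrix.toEuclideanLin (Y - Z) v‖}
      ≤ maxMinVal (Submodule.span 𝕜 (Set.range X)) Y :=
    le_csSup ⟨σ, hout_bdd⟩ ⟨v, hv1, rfl⟩
  have hub : maxMinVal (Submodule.span 𝕜 (Set.range X)) Y ≤ σ :=
    csSup_le ⟨_, hout_mem⟩ hout_bdd
  rw [hmin]
  exact le_antisymm hub (le_trans hvElem hle2)
end

section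
/- Let 𝒳 = span{X_1, …, X_k} ⊂ 𝔽^{n×n} (𝔽 = ℝ or ℂ) be a k-dimensional subspace and let X_* ∈ 𝒳 be a spectral approximation of Y ∈ 𝔽^{n×n} \ 𝒳. Define A_i = (Y − X_*)ᴴ X_i for i = 1, …, k and A_Y = (Y − X_*)ᴴ Y. If the set 𝓕(A_Y, A_1, …, A_k) is convex, then max_{‖v‖₂=1} min_{X∈𝒳} ‖(Y − X)v‖₂ = min_{X∈𝒳} ‖Y − X‖₂. -/
open Matrix

variable {𝕜 : Type*} [RCLike 𝕜]

/-! ### Auxiliary lemmas -/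

open Filter Topology

namespace Stmt15Aux

variable {n k : ℕ}

local notation "L" => Matrix.toEuclideanLin

lemma specSet_eq (A : Matrix (Fin n) (Fin n) 𝕜) :
    {r : ℝ | ∃ v : EuclideanSpace 𝕜 (Fin n), ‖v‖ = 1 ∧ r = ‖Matrix.toEuclideanLin A v‖}
      = (fun v : EuclideanSpace 𝕜 (Fin n) => ‖Matrix.toEuclideanLin A v‖) '' Metric.sphere 0 1 := by
  ext r
  simp only [Set.mem_setOf_eq, Set.mem_image, mem_sphere_zero_iff_norm]
  constructor
  · rintro ⟨v, h1, h2⟩; exact ⟨v, h1, h2.symm⟩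
  · rintro ⟨v, h1, h2⟩; exact ⟨v, h1, h2.symm⟩

lemma specSet_compact (A : Matrix (Fin n) (Fin n) 𝕜) :
    IsCompact {r : ℝ | ∃ v : EuclideanSpace 𝕜 (Fin n), ‖v‖ = 1 ∧ r = ‖Matrix.toEuclideanLin A v‖} := by
  rw [specSet_eq]
  exact (isCompact_sphere 0 1).image
    ((LinearMap.continuous_of_finiteDimensional _).norm)

lemma exists_unit (hn : n ≠ 0) : ∃ v : EuclideanSpace 𝕜 (Fin n), ‖v‖ = 1 := by
  refine ⟨EuclideanSpace.single ⟨0, Nat.pos_of_ne_zero hn⟩ 1, ?_⟩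
  simp [EuclideanSpace.norm_single]

lemma spec_exists (hn : n ≠ 0) (A : Matrix (Fin n) (Fin n) 𝕜) :
    ∃ v : EuclideanSpace 𝕜 (Fin n), ‖v‖ = 1 ∧ ‖Matrix.toEuclideanLin A v‖ = specNorm A := by
  obtain ⟨v0, hv0⟩ := exists_unit (𝕜 := 𝕜) hn
  have hne : {r : ℝ | ∃ v : EuclideanSpace 𝕜 (Fin n), ‖v‖ = 1 ∧ r = ‖Matrix.toEuclideanLin A v‖}.Nonempty :=
    ⟨_, v0, hv0, rfl⟩
  obtain ⟨v, h1, h2⟩ := (specSet_compact A).sSup_mem hne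
  exact ⟨v, h1, h2.symm⟩

lemma spec_le (A : Matrix (Fin n) (Fin n) 𝕜) {v : EuclideanSpace 𝕜 (Fin n)} (hv : ‖v‖ = 1) :
    ‖Matrix.toEuclideanLin A v‖ ≤ specNorm A :=
  le_csSup (specSet_compact A).bddAbove ⟨v, hv, rfl⟩

lemma spec_nonneg (hn : n ≠ 0) (A : Matrix (Fin n) (Fin n) 𝕜) : 0 ≤ specNorm A := by
  obtain ⟨v, hv, h⟩ := spec_exists hn A
  rw [← h]; positivity

lemma inner_conjTranspose_mul (B C : Matrix (Fin n) (Fin n) 𝕜) (v : EuclideanSpace 𝕜 (Fin n)) :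
    (inner 𝕜 v (L (Bᴴ * C) v) : 𝕜) = inner 𝕜 (L B v) (L C v) := by
  have h : L (Bᴴ * C) v = L Bᴴ (L C v) := by
    simp [Matrix.toEuclideanLin_apply, Matrix.mulVec_mulVec]
  rw [h, Matrix.toEuclideanLin_conjTranspose_eq_adjoint, LinearMap.adjoint_inner_right]

lemma first_order (hn : n ≠ 0) (𝒳 : Submodule 𝕜 (Matrix (Fin n) (Fin n) 𝕜))
    (Y Xs W : Matrix (Fin n) (Fin n) 𝕜) (hXs : Xs ∈ 𝒳)
    (hopt : ∀ X ∈ 𝒳, specNorm (Y - Xs) ≤ specNorm (Y - X)) (hW : W ∈ 𝒳) :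
    ∃ v : EuclideanSpace 𝕜 (Fin n), ‖v‖ = 1 ∧ ‖L (Y - Xs) v‖ = specNorm (Y - Xs) ∧
      0 ≤ RCLike.re (inner 𝕜 (L (Y - Xs) v) (L W v) : 𝕜) := by
  set M := Y - Xs with hM
  set σ := specNorm M with hσ
  by_contra hcon
  push_neg at hcon
  have contM : Continuous fun v : EuclideanSpace 𝕜 (Fin n) => ‖L M v‖ :=
    (LinearMap.continuous_of_finiteDimensional _).norm
  have contW : Continuous fun v : EuclideanSpace 𝕜 (Fin n) => ‖L W v‖ :=
    (LinearMap.continuous_of_finiteDimensional _).norm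
  have contRe : Continuous fun v : EuclideanSpace 𝕜 (Fin n) =>
      RCLike.re (inner 𝕜 (L M v) (L W v) : 𝕜) :=
    RCLike.continuous_re.comp ((LinearMap.continuous_of_finiteDimensional
      (L M : _ →ₗ[𝕜] _)).inner (LinearMap.continuous_of_finiteDimensional _))
  set t : ℕ → ℝ := fun j => 1 / (j + 1) with ht
  have htpos : ∀ j, 0 < t j := fun j => by positivity
  have hclaim : ∃ j : ℕ, specNorm (M + ((t j : 𝕜) • W)) < σ := by
    by_contra hcl
    push_neg at hcl
    have hv : ∀ j : ℕ, ∃ v : EuclideanSpace 𝕜 (Fin n), ‖v‖ = 1 ∧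
        σ ≤ ‖L (M + ((t j : 𝕜) • W)) v‖ := by
      intro j
      obtain ⟨v, hv1, hv2⟩ := spec_exists hn (M + ((t j : 𝕜) • W))
      exact ⟨v, hv1, hv2.symm ▸ hcl j⟩
    choose v hv1 hv2 using hv
    have hmem : ∀ j, v j ∈ Metric.sphere (0 : EuclideanSpace 𝕜 (Fin n)) 1 := fun j =>
      mem_sphere_zero_iff_norm.2 (hv1 j)
    obtain ⟨a, haS, φ, hφ, hconv⟩ :=
      (isCompact_sphere (0 : EuclideanSpace 𝕜 (Fin n)) 1).tendsto_subseq hmem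
    have ha : ‖a‖ = 1 := mem_sphere_zero_iff_norm.1 haS
    have key : ∀ j, σ ^ 2 ≤ ‖L M (v j)‖ ^ 2
        + 2 * (t j * RCLike.re (inner 𝕜 (L M (v j)) (L W (v j)) : 𝕜))
        + (t j * ‖L W (v j)‖) ^ 2 := by
      intro j
      have hexp : L (M + ((t j : 𝕜) • W)) (v j) = L M (v j) + (t j : 𝕜) • (L W (v j)) := by
        rw [map_add, _root_.map_smul, LinearMap.add_apply, LinearMap.smul_apply]
      have h1 : σ ^ 2 ≤ ‖L (M + ((t j : 𝕜) • W)) (v j)‖ ^ 2 :=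
        pow_le_pow_left₀ (spec_nonneg hn M) (hv2 j) 2
      rw [hexp, norm_add_sq (𝕜 := 𝕜)] at h1
      rw [inner_smul_right (𝕜 := 𝕜), RCLike.re_ofReal_mul] at h1
      have hns : ‖((t j : ℝ) : 𝕜) • (L W (v j))‖ = t j * ‖L W (v j)‖ := by
        rw [norm_smul, RCLike.norm_ofReal, abs_of_pos (htpos j)]
      rw [hns] at h1
      exact h1
    have hts : Tendsto (fun j => t (φ j)) atTop (𝓝 0) :=
      tendsto_one_div_add_atTop_nhds_zero_nat.comp hφ.tendsto_atTop
    have hMlim : Tendsto (fun j => ‖L M (v (φ j))‖) atTop (𝓝 ‖L M a‖) :=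
      (contM.tendsto a).comp hconv
    have hWlim : Tendsto (fun j => ‖L W (v (φ j))‖) atTop (𝓝 ‖L W a‖) :=
      (contW.tendsto a).comp hconv
    have hRelim : Tendsto (fun j => RCLike.re (inner 𝕜 (L M (v (φ j))) (L W (v (φ j))) : 𝕜)) atTop
        (𝓝 (RCLike.re (inner 𝕜 (L M a) (L W a) : 𝕜))) :=
      (contRe.tendsto a).comp hconv
    have hRHS : Tendsto (fun j => ‖L M (v (φ j))‖ ^ 2
        + 2 * (t (φ j) * RCLike.re (inner 𝕜 (L M (v (φ j))) (L W (v (φ j))) : 𝕜))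
        + (t (φ j) * ‖L W (v (φ j))‖) ^ 2) atTop
        (𝓝 (‖L M a‖ ^ 2 + 2 * (0 * RCLike.re (inner 𝕜 (L M a) (L W a) : 𝕜)) + (0 * ‖L W a‖) ^ 2)) :=
      ((hMlim.pow 2).add ((hts.mul hRelim).const_mul 2)).add ((hts.mul hWlim).pow 2)
    have hA : σ ^ 2 ≤ ‖L M a‖ ^ 2 := by
      have := le_of_tendsto_of_tendsto' (tendsto_const_nhds (x := σ ^ 2)) hRHS (fun j => key (φ j))
      simpa using this
    have hA2 : ‖L M a‖ = σ := by
      have h1 : ‖L M a‖ ≤ σ := spec_le M ha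
      nlinarith [spec_nonneg hn M, norm_nonneg (L M a)]
    have hB : 0 ≤ RCLike.re (inner 𝕜 (L M a) (L W a) : 𝕜) := by
      have hineq : ∀ j, -(t (φ j) * ‖L W (v (φ j))‖ ^ 2) / 2
          ≤ RCLike.re (inner 𝕜 (L M (v (φ j))) (L W (v (φ j))) : 𝕜) := by
        intro j
        have kk := key (φ j)
        have hle : ‖L M (v (φ j))‖ ≤ σ := spec_le M (hv1 (φ j))
        have h2 : 0 ≤ 2 * (t (φ j) * RCLike.re (inner 𝕜 (L M (v (φ j))) (L W (v (φ j))) : 𝕜))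
            + (t (φ j) * ‖L W (v (φ j))‖) ^ 2 := by
          nlinarith [norm_nonneg (L M (v (φ j))), spec_nonneg hn M]
        have hpos := htpos (φ j)
        rw [div_le_iff₀ (by norm_num : (0:ℝ) < 2)]
        nlinarith
      have hglim : Tendsto (fun j => -(t (φ j) * ‖L W (v (φ j))‖ ^ 2) / 2) atTop
          (𝓝 (-(0 * ‖L W a‖ ^ 2) / 2)) :=
        ((hts.mul (hWlim.pow 2)).neg).div_const 2
      have := le_of_tendsto_of_tendsto' hglim hRelim hineq
      simpa using this
    exact absurd hB (not_le.2 (hcon a ha hA2))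
  obtain ⟨j, hj⟩ := hclaim
  have hmem : Xs - (t j : 𝕜) • W ∈ 𝒳 := Submodule.sub_mem _ hXs (Submodule.smul_mem _ _ hW)
  have := hopt _ hmem
  rw [show Y - (Xs - (t j : 𝕜) • W) = M + (t j : 𝕜) • W by rw [hM]; module] at this
  exact absurd (lt_of_le_of_lt this hj) (lt_irrefl _)

lemma functional_decomp {m : ℕ} (f : (Fin m → 𝕜) →L[ℝ] ℝ) :
    ∃ a : Fin m → 𝕜, ∀ w : Fin m → 𝕜, f w = ∑ j, RCLike.re (a j * w j) := by
  refine ⟨fun j => ((f (Pi.single j 1) : ℝ) : 𝕜)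
    - ((f (Pi.single j RCLike.I) : ℝ) : 𝕜) * RCLike.I, fun w => ?_⟩
  have hw : w = ∑ j, Pi.single j (w j) := by rw [Finset.univ_sum_single]
  conv_lhs => rw [hw]
  rw [map_sum]
  refine Finset.sum_congr rfl fun j _ => ?_
  have hz : Pi.single j (w j) = (RCLike.re (w j) • (Pi.single j (1 : 𝕜) : Fin m → 𝕜)
      + RCLike.im (w j) • (Pi.single j (RCLike.I : 𝕜) : Fin m → 𝕜)) := by
    rw [← Pi.single_smul, ← Pi.single_smul, ← Pi.single_add]
    rw [RCLike.real_smul_eq_coe_mul, RCLike.real_smul_eq_coe_mul, mul_one, RCLike.re_add_im]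
  rw [hz, map_add, _root_.map_smul, _root_.map_smul]
  have expand : (((f (Pi.single j 1) : ℝ) : 𝕜) - ((f (Pi.single j RCLike.I) : ℝ) : 𝕜) * RCLike.I) * w j
      = ((f (Pi.single j 1) : ℝ) : 𝕜) * w j
        - ((f (Pi.single j RCLike.I) : ℝ) : 𝕜) * (RCLike.I * w j) := by
    ring
  rw [expand, map_sub, RCLike.re_ofReal_mul, RCLike.re_ofReal_mul, RCLike.I_mul_re]
  simp only [smul_eq_mul]
  ring

lemma field_comp (Y Xs : Matrix (Fin n) (Fin n) 𝕜) (X : Fin k → Matrix (Fin n) (Fin n) 𝕜)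
    (b : 𝕜) (c : Fin k → 𝕜) (v : EuclideanSpace 𝕜 (Fin n)) :
    RCLike.re (b * (inner 𝕜 v (L ((Y - Xs)ᴴ * Y) v) : 𝕜))
      + ∑ i, RCLike.re (c i * (inner 𝕜 v (L ((Y - Xs)ᴴ * X i) v) : 𝕜))
    = RCLike.re b * ‖L (Y - Xs) v‖ ^ 2
      + RCLike.re (inner 𝕜 (L (Y - Xs) v) (L (b • Xs + ∑ i, c i • X i) v) : 𝕜) := by
  set M := Y - Xs with hM
  set W := b • Xs + ∑ i, c i • X i with hW
  have key : b * (inner 𝕜 v (L (Mᴴ * Y) v) : 𝕜) + ∑ i, c i * (inner 𝕜 v (L (Mᴴ * X i) v) : 𝕜)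
      = b * ((‖L M v‖ : 𝕜)) ^ 2 + (inner 𝕜 (L M v) (L W v) : 𝕜) := by
    rw [inner_conjTranspose_mul]
    conv_lhs => rw [Finset.sum_congr rfl (fun i _ => by
      rw [inner_conjTranspose_mul (B := M) (C := X i) v])]
    have h1 : b * (inner 𝕜 (L M v) (L Y v) : 𝕜)
        = b * (inner 𝕜 (L M v) (L M v) : 𝕜) + b * (inner 𝕜 (L M v) (L Xs v) : 𝕜) := by
      have : L Y v = L M v + L Xs v := by
        rw [hM, map_sub, LinearMap.sub_apply]; abel
      rw [this, inner_add_right]; ring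
    rw [h1]
    have h2 : (inner 𝕜 (L M v) (L W v) : 𝕜)
        = b * (inner 𝕜 (L M v) (L Xs v) : 𝕜) + ∑ i, c i * (inner 𝕜 (L M v) (L (X i) v) : 𝕜) := by
      rw [hW, map_add, _root_.map_smul, LinearMap.add_apply, LinearMap.smul_apply,
        inner_add_right, inner_smul_right]
      congr 1
      rw [map_sum, LinearMap.coe_sum, Finset.sum_apply, inner_sum]
      refine Finset.sum_congr rfl fun i _ => ?_
      rw [_root_.map_smul, LinearMap.smul_apply, inner_smul_right]
    rw [h2, inner_self_eq_norm_sq_to_K]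
    ring
  have hre := congrArg RCLike.re key
  rw [map_add, map_sum] at hre
  rw [hre, map_add]
  congr 1
  rw [mul_comm, ← RCLike.ofReal_pow, RCLike.re_ofReal_mul]
  ring

lemma kField_isClosed {m' : ℕ} (A : Fin m' → Matrix (Fin n) (Fin n) 𝕜) :
    IsClosed (kField A (⊤ : Submodule 𝕜 (EuclideanSpace 𝕜 (Fin n)))) := by
  have heq : kField A (⊤ : Submodule 𝕜 (EuclideanSpace 𝕜 (Fin n)))
      = (fun v : EuclideanSpace 𝕜 (Fin n) =>
          fun i => (inner 𝕜 v (L (A i) v) : 𝕜)) '' Metric.sphere 0 1 := by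
    ext w; constructor
    · rintro ⟨v, -, hv, rfl⟩; exact ⟨v, mem_sphere_zero_iff_norm.2 hv, rfl⟩
    · rintro ⟨v, hv, rfl⟩; exact ⟨v, trivial, mem_sphere_zero_iff_norm.1 hv, rfl⟩
  rw [heq]
  exact ((isCompact_sphere 0 1).image (continuous_pi fun i =>
    Continuous.inner continuous_id (LinearMap.continuous_of_finiteDimensional _))).isClosed

end Stmt15Aux

open Stmt15Aux

theorem stmt15 {n k : ℕ} (X : Fin k → Matrix (Fin n) (Fin n) 𝕜)
    (hdim : Module.finrank 𝕜 (Submodule.span 𝕜 (Set.range X)) = k)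
    (Y Xs : Matrix (Fin n) (Fin n) 𝕜)
    (hY : Y ∉ Submodule.span 𝕜 (Set.range X))
    (happrox : IsSpectralApprox (Submodule.span 𝕜 (Set.range X)) Y Xs)
    (hconv : Convex ℝ (kField (Fin.cons ((Y - Xs)ᴴ * Y) (fun i => (Y - Xs)ᴴ * X i)) ⊤)) :
    maxMinVal (Submodule.span 𝕜 (Set.range X)) Y
      = minMaxVal (Submodule.span 𝕜 (Set.range X)) Y := by
  classical
  set 𝒳 := Submodule.span 𝕜 (Set.range X) with h𝒳
  have hn : n ≠ 0 := by
    rintro rfl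
    exact hY (by
      have : Y = 0 := by ext i j; exact i.elim0
      rw [this]; exact Submodule.zero_mem _)
  have hXs : Xs ∈ 𝒳 := happrox.1
  have hopt : ∀ X' ∈ 𝒳, specNorm (Y - Xs) ≤ specNorm (Y - X') := happrox.2
  have hXmem : ∀ i, X i ∈ 𝒳 := fun i => Submodule.subset_span ⟨i, rfl⟩
  set M := Y - Xs with hM
  set σ := specNorm M with hσ
  set A : Fin (k+1) → Matrix (Fin n) (Fin n) 𝕜 :=
    Fin.cons (Mᴴ * Y) (fun i => Mᴴ * X i) with hA
  have hconv' : Convex ℝ (kField A (⊤ : Submodule 𝕜 (EuclideanSpace 𝕜 (Fin n)))) := hconv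
  set p : Fin (k+1) → 𝕜 := Fin.cons ((σ ^ 2 : ℝ) : 𝕜) 0 with hp
  -- the point (σ², 0, …, 0) belongs to the field
  have hpmem : p ∈ kField A (⊤ : Submodule 𝕜 (EuclideanSpace 𝕜 (Fin n))) := by
    by_contra hpn
    obtain ⟨f, u, hfC, hfp⟩ :=
      geometric_hahn_banach_closed_point hconv' (kField_isClosed A) hpn
    obtain ⟨a, hf⟩ := functional_decomp f
    set W := a 0 • Xs + ∑ i, a (Fin.succ i) • X i with hWdef
    have hWmem : W ∈ 𝒳 := Submodule.add_mem _ (Submodule.smul_mem _ _ hXs)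
      (Submodule.sum_mem _ fun i _ => Submodule.smul_mem _ _ (hXmem i))
    have hfval : ∀ v : EuclideanSpace 𝕜 (Fin n),
        f (fun i => (inner 𝕜 v (Matrix.toEuclideanLin (A i) v) : 𝕜))
          = RCLike.re (a 0) * ‖Matrix.toEuclideanLin M v‖ ^ 2
            + RCLike.re (inner 𝕜 (Matrix.toEuclideanLin M v) (Matrix.toEuclideanLin W v) : 𝕜) := by
      intro v
      rw [hf, Fin.sum_univ_succ]
      simp only [hA, Fin.cons_zero, Fin.cons_succ]
      exact field_comp Y Xs X (a 0) (fun i => a i.succ) v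
    have hfpval : f p = RCLike.re (a 0) * σ ^ 2 := by
      rw [hf, Fin.sum_univ_succ]
      have hz : ∀ i : Fin k, RCLike.re (a i.succ * p i.succ) = 0 := by
        intro i; simp [hp]
      rw [Finset.sum_congr rfl (fun i _ => hz i), Finset.sum_const_zero, add_zero]
      have hp0 : p 0 = ((σ ^ 2 : ℝ) : 𝕜) := by simp [hp]
      rw [hp0, mul_comm, RCLike.re_ofReal_mul]
      ring
    obtain ⟨vm, hvm1, hvm2, hvm3⟩ := first_order hn 𝒳 Y Xs W hXs hopt hWmem
    have hmemC : (fun i => (inner 𝕜 vm (Matrix.toEuclideanLin (A i) vm) : 𝕜))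
        ∈ kField A (⊤ : Submodule 𝕜 (EuclideanSpace 𝕜 (Fin n))) := ⟨vm, trivial, hvm1, rfl⟩
    have h1 := hfC _ hmemC
    rw [hfval vm, hvm2] at h1
    rw [hfpval] at hfp
    linarith [hvm3]
  obtain ⟨v0, -, hv01, hv0e⟩ := hpmem
  have hv0 : ∀ i : Fin (k+1), (inner 𝕜 v0 (Matrix.toEuclideanLin (A i) v0) : 𝕜) = p i :=
    fun i => (congrFun hv0e i).symm
  -- orthogonality
  have hzero : ∀ Z ∈ 𝒳, (inner 𝕜 (Matrix.toEuclideanLin M v0) (Matrix.toEuclideanLin Z v0) : 𝕜) = 0 := by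
    let g : Matrix (Fin n) (Fin n) 𝕜 →ₗ[𝕜] 𝕜 :=
      { toFun := fun Z => (inner 𝕜 (Matrix.toEuclideanLin M v0) (Matrix.toEuclideanLin Z v0) : 𝕜)
        map_add' := by
          intro Z1 Z2
          rw [map_add, LinearMap.add_apply, inner_add_right]
        map_smul' := by
          intro c Z1
          dsimp only [RingHom.id_apply]
          rw [_root_.map_smul, LinearMap.smul_apply, inner_smul_right]
          rfl }
    have hsub : 𝒳 ≤ LinearMap.ker g := by
      rw [h𝒳, Submodule.span_le]
      rintro _ ⟨i, rfl⟩
      have := hv0 i.succ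
      rw [hA] at this
      simp only [Fin.cons_succ] at this
      rw [inner_conjTranspose_mul] at this
      have hps : p i.succ = 0 := by simp [hp]
      rw [hps] at this
      exact LinearMap.mem_ker.mpr this
    intro Z hZ
    exact LinearMap.mem_ker.mp (hsub hZ)
  -- ‖M v0‖ = σ
  have hself : (inner 𝕜 (Matrix.toEuclideanLin M v0) (Matrix.toEuclideanLin M v0) : 𝕜)
      = ((σ ^ 2 : ℝ) : 𝕜) := by
    have h0 : (inner 𝕜 (Matrix.toEuclideanLin M v0) (Matrix.toEuclideanLin Y v0) : 𝕜)
        = ((σ ^ 2 : ℝ) : 𝕜) := by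
      rw [← inner_conjTranspose_mul]
      have := hv0 0
      rw [hA] at this
      simp only [Fin.cons_zero] at this
      rw [this]
      simp [hp]
    have hXs0 := hzero Xs hXs
    have hdec : Matrix.toEuclideanLin M v0
        = Matrix.toEuclideanLin Y v0 - Matrix.toEuclideanLin Xs v0 := by
      rw [hM, map_sub, LinearMap.sub_apply]
    nth_rewrite 2 [hdec]
    rw [inner_sub_right, h0, hXs0, sub_zero]
  have hMv0 : ‖Matrix.toEuclideanLin M v0‖ = σ := by
    rw [inner_self_eq_norm_sq_to_K, ← RCLike.ofReal_pow] at hself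
    have h2 : ‖Matrix.toEuclideanLin M v0‖ ^ 2 = σ ^ 2 := RCLike.ofReal_inj.1 hself
    nlinarith [norm_nonneg (Matrix.toEuclideanLin M v0), spec_nonneg hn M]
  -- lower bound for all X' ∈ 𝒳
  have hlower : ∀ X' ∈ 𝒳, σ ≤ ‖Matrix.toEuclideanLin (Y - X') v0‖ := by
    intro X' hX'
    have hd : Matrix.toEuclideanLin (Y - X') v0
        = Matrix.toEuclideanLin M v0 + Matrix.toEuclideanLin (Xs - X') v0 := by
      rw [show Y - X' = M + (Xs - X') by rw [hM]; abel, map_add, LinearMap.add_apply]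
    have hz := hzero (Xs - X') (Submodule.sub_mem _ hXs hX')
    have hsq : ‖Matrix.toEuclideanLin (Y - X') v0‖ ^ 2
        = σ ^ 2 + ‖Matrix.toEuclideanLin (Xs - X') v0‖ ^ 2 := by
      rw [hd, norm_add_sq (𝕜 := 𝕜), hz, hMv0]
      simp
    nlinarith [norm_nonneg (Matrix.toEuclideanLin (Y - X') v0), spec_nonneg hn M,
      norm_nonneg (Matrix.toEuclideanLin (Xs - X') v0)]
  -- compute minMaxVal
  have hmin : minMaxVal 𝒳 Y = σ := by
    rw [minMaxVal]
    apply le_antisymm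
    · exact csInf_le ⟨σ, by rintro r ⟨X', hX', rfl⟩; exact hopt X' hX'⟩ ⟨Xs, hXs, rfl⟩
    · exact le_csInf ⟨σ, Xs, hXs, rfl⟩ (by rintro r ⟨X', hX', rfl⟩; exact hopt X' hX')
  -- compute maxMinVal
  have hmax : maxMinVal 𝒳 Y = σ := by
    rw [maxMinVal]
    have hinner_bdd : ∀ v : EuclideanSpace 𝕜 (Fin n), ‖v‖ = 1 →
        sInf {s : ℝ | ∃ X' ∈ 𝒳, s = ‖Matrix.toEuclideanLin (Y - X') v‖} ≤ σ := by
      intro v hv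
      refine le_trans (csInf_le ⟨0, ?_⟩ ⟨Xs, hXs, rfl⟩) (spec_le (Y - Xs) hv)
      rintro s ⟨X', hX', rfl⟩; exact norm_nonneg _
    apply le_antisymm
    · refine csSup_le ⟨_, v0, hv01, rfl⟩ ?_
      rintro r ⟨v, hv, rfl⟩
      exact hinner_bdd v hv
    · have hge : σ ≤ sInf {s : ℝ | ∃ X' ∈ 𝒳, s = ‖Matrix.toEuclideanLin (Y - X') v0‖} :=
        le_csInf ⟨_, Xs, hXs, rfl⟩ (by rintro s ⟨X', hX', rfl⟩; exact hlower X' hX')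
      refine le_trans hge (le_csSup ⟨σ, ?_⟩ ⟨v0, hv01, rfl⟩)
      rintro r ⟨v, hv, rfl⟩
      exact hinner_bdd v hv
  rw [hmin, hmax]
end

section
/- Let 𝒳 = span{X_1, …, X_k} ⊂ 𝔽^{n×n} (𝔽 = ℝ or ℂ) be a k-dimensional subspace and let X_* ∈ 𝒳 be a spectral approximation of Y ∈ 𝔽^{n×n} \ 𝒳. If dim(Σ_{Y−X_*}) = 1, i.e., the maximal singular value of Y − X_* is simple, then max_{‖v‖₂=1} min_{X∈𝒳} ‖(Y − X)v‖₂ = min_{X∈𝒳} ‖Y − X‖₂. -/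
open Matrix

variable {𝕜 : Type*} [RCLike 𝕜]

set_option synthInstance.maxHeartbeats 1000000
set_option maxHeartbeats 4000000

section AuxLemmas
variable {n : ℕ}

lemma aux_bdd (A : Matrix (Fin n) (Fin n) 𝕜) :
    BddAbove {r : ℝ | ∃ v : EuclideanSpace 𝕜 (Fin n), ‖v‖ = 1 ∧ r = ‖Matrix.toEuclideanLin A v‖} := by
  refine ⟨‖LinearMap.toContinuousLinearMap (toEuclideanLin A)‖, ?_⟩
  rintro r ⟨v, hv, rfl⟩
  simpa [hv] using (LinearMap.toContinuousLinearMap (toEuclideanLin A)).le_opNorm v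

lemma aux_le_spec (A : Matrix (Fin n) (Fin n) 𝕜) {v : EuclideanSpace 𝕜 (Fin n)} (hv : ‖v‖ = 1) :
    ‖toEuclideanLin A v‖ ≤ specNorm A :=
  le_csSup (aux_bdd A) ⟨v, hv, rfl⟩

lemma aux_spec_nonneg (A : Matrix (Fin n) (Fin n) 𝕜) : 0 ≤ specNorm A :=
  Real.sSup_nonneg (by rintro r ⟨v, hv, rfl⟩; positivity)

lemma aux_opnorm_bound (A : Matrix (Fin n) (Fin n) 𝕜) (x : EuclideanSpace 𝕜 (Fin n)) :
    ‖toEuclideanLin A x‖ ≤ ‖LinearMap.toContinuousLinearMap (toEuclideanLin A)‖ * ‖x‖ :=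
  (LinearMap.toContinuousLinearMap (toEuclideanLin A)).le_opNorm x

lemma aux_spec_pos (A : Matrix (Fin n) (Fin n) 𝕜) (hA : A ≠ 0) : 0 < specNorm A := by
  have h1 : toEuclideanLin A ≠ 0 := fun h => hA (by simpa using (toEuclideanLin (𝕜 := 𝕜)).injective (by simpa using h))
  obtain ⟨x, hx⟩ : ∃ x, toEuclideanLin A x ≠ 0 := by
    by_contra h; push_neg at h; exact h1 (LinearMap.ext fun x => h x)
  have hx0 : x ≠ 0 := fun h => hx (by simp [h])
  have hxn : ‖x‖ ≠ 0 := norm_ne_zero_iff.2 hx0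
  set u : EuclideanSpace 𝕜 (Fin n) := (‖x‖⁻¹ : 𝕜) • x with hu
  have hun : ‖u‖ = 1 := by
    rw [hu, norm_smul]
    simp [norm_inv, hxn, inv_mul_cancel₀]
  have : (0:ℝ) < ‖toEuclideanLin A u‖ := by
    rw [hu, LinearMap.map_smul, norm_smul]
    have h2 : (0:ℝ) < ‖toEuclideanLin A x‖ := by
      rcases eq_or_lt_of_le (norm_nonneg (toEuclideanLin A x)) with h|h
      · exact absurd (norm_eq_zero.1 h.symm) hx
      · exact h
    have h3 : (0:ℝ) < ‖((‖x‖⁻¹ : 𝕜))‖ := by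
      rcases eq_or_lt_of_le (norm_nonneg ((‖x‖⁻¹ : 𝕜))) with h|h
      · exfalso
        have := norm_eq_zero.1 h.symm
        rw [inv_eq_zero, RCLike.ofReal_eq_zero] at this
        exact hxn this
      · exact h
    positivity
  exact lt_of_lt_of_le this (aux_le_spec A hun)


lemma exists_gap (A : Matrix (Fin n) (Fin n) 𝕜) (hn : 0 < n)
    (hdim : Module.finrank 𝕜 (maxRSV A) = 1) :
    ∃ (v : EuclideanSpace 𝕜 (Fin n)) (g : ℝ), ‖v‖ = 1 ∧
      ‖toEuclideanLin A v‖ = specNorm A ∧ 0 < g ∧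
      (∀ y : EuclideanSpace 𝕜 (Fin n), (inner 𝕜 v y : 𝕜) = 0 →
        (inner 𝕜 (toEuclideanLin A v) (toEuclideanLin A y) : 𝕜) = 0 ∧
        ‖toEuclideanLin A y‖^2 ≤ ((specNorm A)^2 - g) * ‖y‖^2) := by
  have hH : (Aᴴ * A).IsHermitian := isHermitian_conjTranspose_mul_self A
  set b := hH.eigenvectorBasis with hb
  set μ := hH.eigenvalues with hμ
  have hLb : ∀ j, toEuclideanLin (Aᴴ * A) (b j) = ((μ j : ℝ) : 𝕜) • b j := by
    intro j
    have h := hH.mulVec_eigenvectorBasis j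
    rw [toEuclideanLin_apply]
    ext i
    simpa using congrFun h i
  have hadj : ∀ z y : EuclideanSpace 𝕜 (Fin n),
      (inner 𝕜 (toEuclideanLin A z) (toEuclideanLin A y) : 𝕜) = inner 𝕜 z (toEuclideanLin (Aᴴ * A) y) := by
    intro z y
    have : toEuclideanLin (Aᴴ * A) = (toEuclideanLin Aᴴ).comp (toEuclideanLin A) := by
      rw [toEuclideanLin_eq_toLin]; exact Matrix.toLin_mul _ _ _ _ _
    rw [this, LinearMap.comp_apply, Matrix.toEuclideanLin_conjTranspose_eq_adjoint,
      LinearMap.adjoint_inner_right]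
  have hsum : ∀ x : EuclideanSpace 𝕜 (Fin n),
      toEuclideanLin (Aᴴ * A) x = ∑ i, ((inner 𝕜 (b i) x : 𝕜) * ((μ i : ℝ) : 𝕜)) • b i := by
    intro x
    conv_lhs => rw [← b.sum_repr' x]
    rw [map_sum]
    refine Finset.sum_congr rfl fun i _ => ?_
    rw [LinearMap.map_smul, hLb, smul_smul]
  have horth : ∀ i j, (inner 𝕜 (b i) (b j) : 𝕜) = if i = j then 1 else 0 :=
    fun i j => orthonormal_iff_ite.1 b.orthonormal i j
  have hQ : ∀ x : EuclideanSpace 𝕜 (Fin n),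
      ‖toEuclideanLin A x‖^2 = ∑ i, μ i * ‖(inner 𝕜 (b i) x : 𝕜)‖^2 := by
    intro x
    have h1 : (‖toEuclideanLin A x‖:ℝ)^2
        = RCLike.re (inner 𝕜 (toEuclideanLin A x) (toEuclideanLin A x) : 𝕜) :=
      (inner_self_eq_norm_sq _).symm
    rw [h1, hadj, hsum, inner_sum, map_sum]
    refine Finset.sum_congr rfl fun i _ => ?_
    rw [inner_smul_right]
    have h2 : (inner 𝕜 x (b i) : 𝕜) = starRingEnd 𝕜 (inner 𝕜 (b i) x : 𝕜) := (inner_conj_symm _ _).symm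
    rw [h2]
    set c := (inner 𝕜 (b i) x : 𝕜)
    have : c * ((μ i : ℝ) : 𝕜) * starRingEnd 𝕜 c = ((μ i : ℝ) : 𝕜) * ((‖c‖ : 𝕜))^2 := by
      rw [mul_comm c, mul_assoc, RCLike.mul_conj]
    rw [this]
    have : ((μ i : ℝ) : 𝕜) * ((‖c‖ : 𝕜))^2 = (((μ i * ‖c‖^2 : ℝ)) : 𝕜) := by push_cast; ring
    rw [this, RCLike.ofReal_re]
  have hP : ∀ x : EuclideanSpace 𝕜 (Fin n), ‖x‖^2 = ∑ i, ‖(inner 𝕜 (b i) x : 𝕜)‖^2 := by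
    intro x
    have h1 : (‖x‖:ℝ)^2 = RCLike.re (inner 𝕜 x x : 𝕜) := (inner_self_eq_norm_sq _).symm
    rw [h1, ← b.sum_inner_mul_inner x x, map_sum]
    refine Finset.sum_congr rfl fun i _ => ?_
    have h2 : (inner 𝕜 x (b i) : 𝕜) = starRingEnd 𝕜 (inner 𝕜 (b i) x : 𝕜) := (inner_conj_symm _ _).symm
    rw [h2]
    set c := (inner 𝕜 (b i) x : 𝕜)
    rw [RCLike.conj_mul, ← RCLike.ofReal_pow, RCLike.ofReal_re]
  have hAb : ∀ j, ‖toEuclideanLin A (b j)‖^2 = μ j := by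
    intro j
    rw [hQ]
    rw [Finset.sum_eq_single j]
    · rw [horth]; simp
    · intro i _ hij
      rw [horth]; simp [hij]
    · intro h; exact absurd (Finset.mem_univ j) h
  have hμnn : ∀ j, 0 ≤ μ j := fun j => by rw [← hAb j]; positivity
  obtain ⟨i₁, -, hmax⟩ := Finset.exists_max_image (Finset.univ : Finset (Fin n)) μ
    ⟨⟨0, hn⟩, Finset.mem_univ _⟩
  have hmax' : ∀ j, μ j ≤ μ i₁ := fun j => hmax j (Finset.mem_univ j)
  have hv1 : ‖b i₁‖ = 1 := b.orthonormal.1 i₁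
  have hxle : ∀ x : EuclideanSpace 𝕜 (Fin n), ‖x‖ = 1 →
      ‖toEuclideanLin A x‖ ≤ ‖toEuclideanLin A (b i₁)‖ := by
    intro x hx
    have h1 : ‖toEuclideanLin A x‖^2 ≤ μ i₁ := by
      rw [hQ]
      calc ∑ i, μ i * ‖(inner 𝕜 (b i) x : 𝕜)‖^2 ≤ ∑ i, μ i₁ * ‖(inner 𝕜 (b i) x : 𝕜)‖^2 :=
            Finset.sum_le_sum fun i _ => mul_le_mul_of_nonneg_right (hmax' i) (by positivity)
        _ = μ i₁ * ‖x‖^2 := by rw [← Finset.mul_sum, ← hP]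
        _ = μ i₁ := by rw [hx]; ring
    have h2 : ‖toEuclideanLin A (b i₁)‖^2 = μ i₁ := hAb i₁
    nlinarith [norm_nonneg (toEuclideanLin A x), norm_nonneg (toEuclideanLin A (b i₁))]
  have hσ : specNorm A = ‖toEuclideanLin A (b i₁)‖ := by
    refine IsGreatest.csSup_eq ⟨⟨b i₁, hv1, rfl⟩, ?_⟩
    rintro r ⟨x, hx, rfl⟩
    exact hxle x hx
  have hsimple : ∀ j, j ≠ i₁ → μ j < μ i₁ := by
    intro j hj
    rcases lt_or_eq_of_le (hmax' j) with h | h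
    · exact h
    · exfalso
      have hbjA : ‖toEuclideanLin A (b j)‖ = specNorm A := by
        rw [hσ]
        refine (sq_eq_sq₀ (norm_nonneg _) (norm_nonneg _)).1 ?_
        rw [hAb, hAb, h]
      have hbj1 : ‖b j‖ = 1 := b.orthonormal.1 j
      have hbiA : ‖toEuclideanLin A (b i₁)‖ = specNorm A := hσ.symm
      -- span of the two orthonormal vectors is ≤ maxRSV A, contradiction with finrank 1
      have hinj : Function.Injective ![i₁, j] := by
        intro a c hac
        fin_cases a <;> fin_cases c <;>
          simp only [Matrix.cons_val_zero, Matrix.cons_val_one, Matrix.head_cons] at hac <;>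
          first
          | rfl
          | exact absurd hac.symm hj
          | exact absurd hac hj
      have hON : Orthonormal 𝕜 (b ∘ ![i₁, j]) := b.orthonormal.comp _ hinj
      have hLI : LinearIndependent 𝕜 (⇑b ∘ ![i₁, j]) := hON.linearIndependent
      have hcard : Module.finrank 𝕜 (Submodule.span 𝕜 (Set.range (⇑b ∘ ![i₁, j]))) = 2 := by
        rw [finrank_span_eq_card hLI]; simp
      have hle : Submodule.span 𝕜 (Set.range (⇑b ∘ ![i₁, j])) ≤ maxRSV A := by
        rw [Submodule.span_le]
        rintro x ⟨a, rfl⟩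
        apply Submodule.subset_span
        fin_cases a
        · exact ⟨hv1, hbiA⟩
        · exact ⟨hbj1, hbjA⟩
      have := Submodule.finrank_mono hle
      rw [hcard, hdim] at this
      omega
  obtain ⟨g, hg, hgapμ⟩ : ∃ g > 0, ∀ j, j ≠ i₁ → μ j ≤ μ i₁ - g := by
    rcases (Finset.univ.erase i₁).eq_empty_or_nonempty with he | hne
    · exact ⟨1, one_pos, fun j hj =>
        absurd (Finset.mem_erase.2 ⟨hj, Finset.mem_univ j⟩) (by simp [he])⟩
    · refine ⟨μ i₁ - (Finset.univ.erase i₁).sup' hne μ, ?_, ?_⟩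
      · have : (Finset.univ.erase i₁).sup' hne μ < μ i₁ :=
          (Finset.sup'_lt_iff hne).2 fun j hjm => hsimple j (Finset.mem_erase.1 hjm).1
        linarith
      · intro j hj
        have : μ j ≤ (Finset.univ.erase i₁).sup' hne μ :=
          Finset.le_sup' μ (Finset.mem_erase.2 ⟨hj, Finset.mem_univ j⟩)
        linarith
  refine ⟨b i₁, g, hv1, hσ.symm, hg, ?_⟩
  intro y hy
  constructor
  · rw [hadj, hsum, inner_sum]
    rw [Finset.sum_eq_single i₁]
    · rw [inner_smul_right, hy]; ring
    · intro i _ hii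
      rw [inner_smul_right, horth]
      simp [Ne.symm hii]
    · intro h; exact absurd (Finset.mem_univ i₁) h
  · have hσ2 : (specNorm A)^2 = μ i₁ := by rw [hσ, hAb]
    rw [hσ2, hQ, hP y, Finset.mul_sum]
    refine Finset.sum_le_sum fun i _ => ?_
    by_cases hi : i = i₁
    · subst hi
      rw [hy]
      simp
    · exact mul_le_mul_of_nonneg_right (hgapμ i hi) (by positivity)


lemma spec_decrease (A B : Matrix (Fin n) (Fin n) 𝕜) (v : EuclideanSpace 𝕜 (Fin n)) (g δ : ℝ)
    (hv : ‖v‖ = 1) (hAv : ‖toEuclideanLin A v‖ = specNorm A) (hg : 0 < g)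
    (hgap : ∀ y : EuclideanSpace 𝕜 (Fin n), (inner 𝕜 v y : 𝕜) = 0 →
        (inner 𝕜 (toEuclideanLin A v) (toEuclideanLin A y) : 𝕜) = 0 ∧
        ‖toEuclideanLin A y‖^2 ≤ ((specNorm A)^2 - g) * ‖y‖^2)
    (hδ : 0 < δ) (hBv : (inner 𝕜 (toEuclideanLin A v) (toEuclideanLin B v) : 𝕜) = (δ : 𝕜)) :
    ∃ t : ℝ, 0 < t ∧ specNorm (A - ((t : ℝ) : 𝕜) • B) < specNorm A := by
  have hLAv : toEuclideanLin A v ≠ 0 := by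
    intro h
    rw [h, inner_zero_left] at hBv
    have : (δ:ℝ) = 0 := by exact_mod_cast hBv.symm
    linarith
  have hσpos : 0 < specNorm A := by
    rcases eq_or_lt_of_le (norm_nonneg (toEuclideanLin A v)) with h | h
    · exact absurd (norm_eq_zero.1 h.symm) hLAv
    · exact hAv ▸ h
  set σ : ℝ := specNorm A with hσdef
  have hLBv : toEuclideanLin B v ≠ 0 := by
    intro h
    rw [h, inner_zero_right] at hBv
    have : (δ:ℝ) = 0 := by exact_mod_cast hBv.symm
    linarith
  set CA : ℝ := ‖LinearMap.toContinuousLinearMap (toEuclideanLin A)‖ with hCA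
  set CB : ℝ := ‖LinearMap.toContinuousLinearMap (toEuclideanLin B)‖ with hCB
  have hCAnn : 0 ≤ CA := norm_nonneg _
  have hboundA : ∀ z : EuclideanSpace 𝕜 (Fin n), ‖toEuclideanLin A z‖ ≤ CA * ‖z‖ :=
    fun z => (LinearMap.toContinuousLinearMap (toEuclideanLin A)).le_opNorm z
  have hboundB : ∀ z : EuclideanSpace 𝕜 (Fin n), ‖toEuclideanLin B z‖ ≤ CB * ‖z‖ :=
    fun z => (LinearMap.toContinuousLinearMap (toEuclideanLin B)).le_opNorm z
  have hCBpos : 0 < CB := by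
    have h1 : 0 < ‖toEuclideanLin B v‖ := by
      rcases eq_or_lt_of_le (norm_nonneg (toEuclideanLin B v)) with h | h
      · exact absurd (norm_eq_zero.1 h.symm) hLBv
      · exact h
    have h2 := hboundB v
    rw [hv, mul_one] at h2
    linarith
  set κ : ℝ := CB * (σ + CA) with hκ
  have hκnn : 0 ≤ κ := by positivity
  set D : ℝ := CB^2 + 2 * κ^2 / g with hD
  have hDpos : 0 < D := by positivity
  set t : ℝ := min (g / (4 * δ)) (δ / D) with ht
  have htpos : 0 < t := lt_min (by positivity) (by positivity)
  have ht1 : t ≤ g / (4 * δ) := min_le_left _ _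
  have ht2 : t ≤ δ / D := min_le_right _ _
  refine ⟨t, htpos, ?_⟩
  have key : ∀ x : EuclideanSpace 𝕜 (Fin n), ‖x‖ = 1 →
      ‖toEuclideanLin (A - ((t : ℝ) : 𝕜) • B) x‖^2 ≤ σ^2 - t * δ := by
    intro x hx
    set α : 𝕜 := inner 𝕜 v x with hα
    set y : EuclideanSpace 𝕜 (Fin n) := x - α • v with hy
    have hvy : (inner 𝕜 v y : 𝕜) = 0 := by
      rw [hy, inner_sub_right, inner_smul_right, inner_self_eq_norm_sq_to_K, hv, ← hα]
      norm_num
    obtain ⟨hcross, hgapy⟩ := hgap y hvy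
    have hxdecomp : x = α • v + y := by rw [hy]; abel
    set s : ℝ := ‖y‖ with hs
    have hsnn : 0 ≤ s := norm_nonneg _
    have hαs : ‖α‖^2 = 1 - s^2 := by
      have h1 : ‖x‖^2 = ‖α • v‖^2 + 2 * RCLike.re (inner 𝕜 (α • v) y : 𝕜) + ‖y‖^2 := by
        rw [hxdecomp]; exact norm_add_sq _ _
      rw [inner_smul_left, hvy, mul_zero, norm_smul, hv, mul_one, hx, ← hs] at h1
      simp only [map_zero, mul_zero, add_zero, one_pow] at h1
      linarith
    have hαle : ‖α‖ ≤ 1 := by nlinarith [norm_nonneg α, sq_nonneg s]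
    have hs1 : s ≤ 1 := by nlinarith [sq_nonneg ‖α‖]
    set p := toEuclideanLin A x with hp
    set q := toEuclideanLin B x with hqdef
    have hLx : toEuclideanLin (A - ((t : ℝ) : 𝕜) • B) x = p - ((t : ℝ) : 𝕜) • q := by
      have e : toEuclideanLin (A - ((t : ℝ) : 𝕜) • B)
          = toEuclideanLin A - ((t : ℝ) : 𝕜) • toEuclideanLin B := by
        rw [map_sub, LinearEquiv.map_smul]
      rw [e, LinearMap.sub_apply, LinearMap.smul_apply]
    have hpdecomp : p = α • toEuclideanLin A v + toEuclideanLin A y := by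
      rw [hp, hxdecomp, map_add, LinearMap.map_smul]
    have hqdecomp : q = α • toEuclideanLin B v + toEuclideanLin B y := by
      rw [hqdef, hxdecomp, map_add, LinearMap.map_smul]
    have hp2 : ‖p‖^2 ≤ σ^2 * (1 - s^2) + (σ^2 - g) * s^2 := by
      have h1 : ‖p‖^2 = ‖α • toEuclideanLin A v‖^2
          + 2 * RCLike.re (inner 𝕜 (α • toEuclideanLin A v) (toEuclideanLin A y) : 𝕜)
          + ‖toEuclideanLin A y‖^2 := by
        rw [hpdecomp]; exact norm_add_sq _ _
      rw [inner_smul_left, hcross, mul_zero, norm_smul, hAv] at h1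
      simp only [map_zero, mul_zero, add_zero] at h1
      have h2 : (‖α‖ * σ)^2 = ‖α‖^2 * σ^2 := by ring
      rw [h1, h2, hαs]
      nlinarith [hgapy]
    have hre : (1 - s^2) * δ - κ * s ≤ RCLike.re (inner 𝕜 p q : 𝕜) := by
      have t1 : (inner 𝕜 (toEuclideanLin A v) q : 𝕜)
          = α * (δ : 𝕜) + inner 𝕜 (toEuclideanLin A v) (toEuclideanLin B y) := by
        rw [hqdecomp, inner_add_right, inner_smul_right, hBv]
      have t0 : (inner 𝕜 p q : 𝕜) = (starRingEnd 𝕜 α) * (inner 𝕜 (toEuclideanLin A v) q : 𝕜)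
          + (inner 𝕜 (toEuclideanLin A y) q : 𝕜) := by
        rw [hpdecomp, inner_add_left, inner_smul_left]
      have hexp : (inner 𝕜 p q : 𝕜)
          = (starRingEnd 𝕜 α) * α * ((δ:ℝ):𝕜)
            + (starRingEnd 𝕜 α) * (inner 𝕜 (toEuclideanLin A v) (toEuclideanLin B y) : 𝕜)
            + (inner 𝕜 (toEuclideanLin A y) q : 𝕜) := by
        rw [t0, t1]; ring
      rw [hexp, map_add, map_add]
      have e1 : RCLike.re ((starRingEnd 𝕜 α) * α * ((δ:ℝ):𝕜)) = ‖α‖^2 * δ := by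
        rw [RCLike.conj_mul, ← RCLike.ofReal_pow, ← RCLike.ofReal_mul, RCLike.ofReal_re]
      have e2 : |RCLike.re ((starRingEnd 𝕜 α)
          * (inner 𝕜 (toEuclideanLin A v) (toEuclideanLin B y) : 𝕜))| ≤ σ * (CB * s) := by
        refine le_trans (RCLike.abs_re_le_norm _) ?_
        rw [norm_mul]
        have n1 : ‖starRingEnd 𝕜 α‖ ≤ 1 := by rw [RCLike.norm_conj]; exact hαle
        have n2 : ‖(inner 𝕜 (toEuclideanLin A v) (toEuclideanLin B y) : 𝕜)‖ ≤ σ * (CB * s) := by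
          refine le_trans (norm_inner_le_norm _ _) ?_
          rw [hAv, hs]
          exact mul_le_mul_of_nonneg_left (hboundB y) hσpos.le
        calc ‖starRingEnd 𝕜 α‖ * ‖(inner 𝕜 (toEuclideanLin A v) (toEuclideanLin B y) : 𝕜)‖
            ≤ 1 * (σ * (CB * s)) :=
              mul_le_mul n1 n2 (norm_nonneg _) zero_le_one
          _ = σ * (CB * s) := one_mul _
      have e3 : |RCLike.re ((inner 𝕜 (toEuclideanLin A y) q : 𝕜))| ≤ CA * s * CB := by
        refine le_trans (RCLike.abs_re_le_norm _) (le_trans (norm_inner_le_norm _ _) ?_)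
        have b1 : ‖toEuclideanLin A y‖ ≤ CA * s := by rw [hs]; exact hboundA y
        have b2 : ‖q‖ ≤ CB := by
          have h2 := hboundB x
          rwa [hx, mul_one] at h2
        calc ‖toEuclideanLin A y‖ * ‖q‖ ≤ (CA * s) * CB :=
            mul_le_mul b1 b2 (norm_nonneg _) (by positivity)
          _ = CA * s * CB := rfl
      rw [e1]
      have he2 := abs_le.1 e2
      have he3 := abs_le.1 e3
      rw [hαs]
      have hκs : κ * s = σ * (CB * s) + CA * s * CB := by rw [hκ]; ring
      linarith [he2.1, he3.1]
    have hq2 : ‖q‖ ≤ CB := by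
      have h2 := hboundB x
      rwa [hx, mul_one] at h2
    have hexpand : ‖toEuclideanLin (A - ((t : ℝ) : 𝕜) • B) x‖^2
        = ‖p‖^2 - 2 * t * RCLike.re (inner 𝕜 p q : 𝕜) + t^2 * ‖q‖^2 := by
      have h0 : ‖p - ((t : ℝ) : 𝕜) • q‖^2 = ‖p‖^2
          - 2 * RCLike.re (inner 𝕜 p (((t : ℝ) : 𝕜) • q) : 𝕜) + ‖((t : ℝ) : 𝕜) • q‖^2 :=
        norm_sub_sq _ _
      rw [hLx, h0, inner_smul_right, RCLike.re_ofReal_mul, norm_smul,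
        RCLike.norm_ofReal, abs_of_pos htpos]
      ring
    rw [hexpand]
    have am : 2 * t * κ * s ≤ (g/2) * s^2 + 2 * t^2 * κ^2 / g := by
      have hid : g/2 * s^2 + 2 * t^2 * κ^2 / g - 2 * t * κ * s
          = (g * s - 2 * t * κ)^2 / (2 * g) := by
        field_simp
        ring
      have h2 : (0:ℝ) ≤ (g * s - 2 * t * κ)^2 / (2 * g) := by positivity
      linarith
    have htd : t * D ≤ δ := by
      calc t * D ≤ (δ / D) * D := mul_le_mul_of_nonneg_right ht2 hDpos.le
        _ = δ := by field_simp
    have ht1' : 2 * t * δ ≤ g / 2 := by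
      have h2 : t * (4 * δ) ≤ g := by
        calc t * (4 * δ) ≤ (g / (4*δ)) * (4 * δ) :=
              mul_le_mul_of_nonneg_right ht1 (by positivity)
          _ = g := by field_simp
      linarith
    have h2ts : 2 * t * δ * s^2 ≤ (g/2) * s^2 :=
      mul_le_mul_of_nonneg_right ht1' (sq_nonneg s)
    have htD2 : t * (t * D) ≤ t * δ := mul_le_mul_of_nonneg_left htd htpos.le
    have hident : t * (t * D) = t^2 * CB^2 + 2 * t^2 * κ^2 / g := by
      rw [hD]; ring
    have hqsq : t^2 * ‖q‖^2 ≤ t^2 * CB^2 := by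
      have h2 : ‖q‖^2 ≤ CB^2 := by nlinarith [norm_nonneg q]
      nlinarith [sq_nonneg t]
    have hre2 : -(2 * t * RCLike.re (inner 𝕜 p q : 𝕜)) ≤ -(2*t) * ((1 - s^2) * δ - κ * s) := by
      have h2 := mul_le_mul_of_nonneg_left hre (by positivity : (0:ℝ) ≤ 2*t)
      linarith
    have hring1 : -(2*t) * ((1 - s^2) * δ - κ * s)
        = -(2*t*δ) + 2*t*δ*s^2 + 2*t*κ*s := by ring
    have hring2 : σ^2 * (1 - s^2) + (σ^2 - g) * s^2 = σ^2 - g * s^2 := by ring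
    clear_value σ CA CB κ D t s α y p q
    linarith [hp2, hre2, hqsq, am, h2ts, htD2, hident, hring1, hring2]
  have hup : specNorm (A - ((t : ℝ) : 𝕜) • B) ≤ Real.sqrt (σ^2 - t * δ) := by
    apply Real.sSup_le
    · rintro r ⟨x, hx, rfl⟩
      have h1 := key x hx
      have h2 : ‖toEuclideanLin (A - ((t : ℝ) : 𝕜) • B) x‖
          = Real.sqrt (‖toEuclideanLin (A - ((t : ℝ) : 𝕜) • B) x‖^2) := by
        rw [Real.sqrt_sq (norm_nonneg _)]
      rw [h2]
      exact Real.sqrt_le_sqrt h1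
    · exact Real.sqrt_nonneg _
  refine lt_of_le_of_lt hup ((Real.sqrt_lt' hσpos).2 ?_)
  nlinarith [mul_pos htpos hδ]

end AuxLemmas

theorem stmt17 {n k : ℕ} (𝒳 : Submodule 𝕜 (Matrix (Fin n) (Fin n) 𝕜))
    (hdim : Module.finrank 𝕜 𝒳 = k)
    (Y Xs : Matrix (Fin n) (Fin n) 𝕜) (hY : Y ∉ 𝒳)
    (happrox : IsSpectralApprox 𝒳 Y Xs)
    (hSig : Module.finrank 𝕜 (maxRSV (Y - Xs)) = 1) :
    maxMinVal 𝒳 Y = minMaxVal 𝒳 Y := by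
    classical
  obtain ⟨hXs, hopt⟩ := happrox
  have hAne : Y - Xs ≠ 0 := by
    intro h
    rw [sub_eq_zero] at h
    exact hY (h ▸ hXs)
  have hσpos : 0 < specNorm (Y - Xs) := aux_spec_pos _ hAne
  have hn : 0 < n := by
    have h1 : Module.finrank 𝕜 (EuclideanSpace 𝕜 (Fin n)) = n := finrank_euclideanSpace_fin
    have h2 := Submodule.finrank_le (maxRSV (Y - Xs))
    rw [hSig, h1] at h2
    omega
  obtain ⟨v, g, hv1, hAv, hg, hgap⟩ := exists_gap (Y - Xs) hn hSig
  have horth : ∀ B ∈ 𝒳,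
      (inner 𝕜 (toEuclideanLin (Y - Xs) v) (toEuclideanLin B v) : 𝕜) = 0 := by
    intro B hB
    by_contra hc
    set c : 𝕜 := inner 𝕜 (toEuclideanLin (Y - Xs) v) (toEuclideanLin B v) with hcdef
    have hcn : 0 < ‖c‖ := by
      rcases eq_or_lt_of_le (norm_nonneg c) with h | h
      · exact absurd (norm_eq_zero.1 h.symm) hc
      · exact h
    have hcne : ((‖c‖ : ℝ) : 𝕜) ≠ 0 := by
      rw [ne_eq, RCLike.ofReal_eq_zero]
      exact hcn.ne'
    set B' : Matrix (Fin n) (Fin n) 𝕜 := ((starRingEnd 𝕜 c) / ((‖c‖ : ℝ) : 𝕜)) • B with hB'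
    have hB'mem : B' ∈ 𝒳 := Submodule.smul_mem _ _ hB
    have hBv' : (inner 𝕜 (toEuclideanLin (Y - Xs) v) (toEuclideanLin B' v) : 𝕜)
        = ((‖c‖ : ℝ) : 𝕜) := by
      rw [hB', LinearEquiv.map_smul, LinearMap.smul_apply, inner_smul_right, ← hcdef,
        div_mul_eq_mul_div, RCLike.conj_mul]
      rw [sq]
      field_simp
    obtain ⟨t, htpos, hdec⟩ := spec_decrease (Y - Xs) B' v g ‖c‖ hv1 hAv hg hgap hcn hBv'
    have hmem : Xs + ((t : ℝ) : 𝕜) • B' ∈ 𝒳 :=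
      Submodule.add_mem _ hXs (Submodule.smul_mem _ _ hB'mem)
    have hle := hopt _ hmem
    have heq : Y - (Xs + ((t : ℝ) : 𝕜) • B') = (Y - Xs) - ((t : ℝ) : 𝕜) • B' := by abel
    rw [heq] at hle
    linarith
  have hkey : ∀ X ∈ 𝒳, specNorm (Y - Xs) ≤ ‖toEuclideanLin (Y - X) v‖ := by
    intro X hX
    have hBmem : Xs - X ∈ 𝒳 := Submodule.sub_mem _ hXs hX
    have hYX : Y - X = (Y - Xs) + (Xs - X) := by abel
    have hnorm : ‖toEuclideanLin (Y - X) v‖^2 = ‖toEuclideanLin (Y - Xs) v‖^2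
        + 2 * RCLike.re (inner 𝕜 (toEuclideanLin (Y - Xs) v) (toEuclideanLin (Xs - X) v) : 𝕜)
        + ‖toEuclideanLin (Xs - X) v‖^2 := by
      rw [hYX, map_add, LinearMap.add_apply]
      exact norm_add_sq _ _
    rw [horth _ hBmem, map_zero, mul_zero, add_zero, hAv] at hnorm
    have h2 : specNorm (Y - Xs) ^ 2 ≤ ‖toEuclideanLin (Y - X) v‖^2 := by
      rw [hnorm]
      nlinarith [sq_nonneg ‖toEuclideanLin (Xs - X) v‖]
    nlinarith [norm_nonneg (toEuclideanLin (Y - X) v), hσpos]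
  have hmin : minMaxVal 𝒳 Y = specNorm (Y - Xs) := by
    rw [minMaxVal]
    exact IsLeast.csInf_eq ⟨⟨Xs, hXs, rfl⟩, by rintro r ⟨X, hX, rfl⟩; exact hopt X hX⟩
  have hmax : maxMinVal 𝒳 Y = specNorm (Y - Xs) := by
    rw [maxMinVal]
    apply IsGreatest.csSup_eq
    constructor
    · refine ⟨v, hv1, ?_⟩
      symm
      apply IsLeast.csInf_eq
      refine ⟨⟨Xs, hXs, hAv.symm⟩, ?_⟩
      rintro r ⟨X, hX, rfl⟩
      exact hkey X hX
    · rintro r ⟨w, hw, rfl⟩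
      have h1 : ‖toEuclideanLin (Y - Xs) w‖ ≤ specNorm (Y - Xs) := aux_le_spec _ hw
      have h2 : sInf {s : ℝ | ∃ X ∈ 𝒳, s = ‖toEuclideanLin (Y - X) w‖}
          ≤ ‖toEuclideanLin (Y - Xs) w‖ :=
        csInf_le ⟨0, by rintro s ⟨X, hX, rfl⟩; positivity⟩ ⟨Xs, hXs, rfl⟩
      linarith
  rw [hmax, hmin]
end
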